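/- arXiv:math/0307274 — 4 statements merged into one kernel-verified Lean document; each statement's English description precedes it below -/
import Mathlib

section
/- Let 0 < α < 1, 1 < p < ∞, 0 < q ≤ 1 with α = 1/q − 1/p, and let b ∈ Λ_α(T). Let a be an H^q(T)-atom supported in an interval I centered at x_I with radius r < π/4, and let Ĩ be the interval centered at x_I of radius 2r. Then the local part A_1(x) = 1_{Ĩ}(x) · p.v. ∫_T (b(x+t) − b(2x)) a(t) / tan((x−t)/2) dt satisfies ‖A_1‖_{L^p(T)} ≤ C ‖b‖_{Λ_α}, with C independent of the atom a. -/
open MeasureTheory Real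
open intervalIntegral

/-- An `H^q(𝕋)`-atom supported in the interval of center `x_I` and radius `r`:
bounded by `|I|^{-1/q}` and with vanishing moments up to order `[1/q] - 1`. -/
def IsHqAtom (q x_I r : ℝ) (a : ℝ → ℝ) : Prop :=
  Measurable a ∧ (∀ t, a t ≠ 0 → |t - x_I| ≤ r) ∧
  (∀ t, |a t| ≤ (2 * r) ^ (-(1 / q))) ∧
  (∀ k : ℕ, (k : ℝ) ≤ 1 / q - 1 → ∫ t in (x_I - r)..(x_I + r), a t * t ^ k = 0)


lemma abs_le_abs_tan {u : ℝ} (hu : |u| < π / 2) : |u| ≤ |Real.tan u| := by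
  rcases le_or_gt 0 u with h | h
  · rw [abs_of_nonneg h] at *
    calc u ≤ Real.tan u := Real.le_tan h hu
    _ ≤ |Real.tan u| := le_abs_self _
  · rw [abs_of_neg h] at *
    have : -u ≤ Real.tan (-u) := Real.le_tan (by linarith) hu
    rw [Real.tan_neg] at this
    calc -u ≤ -Real.tan u := this
    _ ≤ |Real.tan u| := (neg_le_abs _)

lemma absRpowIntegrable {α : ℝ} (hα : 0 < α) (a b : ℝ) :
    IntervalIntegrable (fun u => |u| ^ (α - 1)) volume a b := by
  have key : ∀ c : ℝ, IntervalIntegrable (fun u => |u| ^ (α - 1)) volume 0 c := by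
    have key0 : ∀ c : ℝ, 0 ≤ c → IntervalIntegrable (fun u => |u| ^ (α - 1)) volume 0 c := by
      intro c hc
      rw [intervalIntegrable_iff, Set.uIoc_of_le hc]
      refine ((intervalIntegrable_rpow' (by linarith : (-1:ℝ) < α - 1) (a := 0)
        (b := c)).1.mono_set subset_rfl).congr_fun ?_ measurableSet_Ioc
      intro u hu
      simp only [abs_of_pos hu.1]
    intro c
    rcases le_or_gt 0 c with hc | hc
    · exact key0 c hc
    · have := key0 (-c) (by linarith)
      rw [IntervalIntegrable.iff_comp_neg] at this
      simpa using this
  exact ((key a).symm.trans (key b))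

lemma absRpowInt {α : ℝ} (hα : 0 < α) {c : ℝ} (hc : 0 ≤ c) :
    ∫ u in (0:ℝ)..c, |u| ^ (α - 1) = c ^ α / α := by
  have h1 : ∫ u in (0:ℝ)..c, |u| ^ (α - 1) = ∫ u in (0:ℝ)..c, u ^ (α - 1) := by
    refine integral_congr fun u hu => ?_
    rw [Set.uIcc_of_le hc] at hu
    rcases eq_or_lt_of_le hu.1 with h | h
    · rw [← h]; simp
    · rw [abs_of_pos h]
  rw [h1, integral_rpow (Or.inl (by linarith)), sub_add_cancel,
    Real.zero_rpow hα.ne', sub_zero]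

lemma absRpowIntSym {α : ℝ} (hα : 0 < α) {c : ℝ} (hc : 0 ≤ c) :
    ∫ u in (-c)..c, |u| ^ (α - 1) = 2 * c ^ α / α := by
  have hneg : ∫ u in (-c)..(0:ℝ), |u| ^ (α - 1) = c ^ α / α := by
    have := intervalIntegral.integral_comp_neg (a := 0) (b := c)
      (fun u => |u| ^ (α - 1))
    simp only [abs_neg, neg_zero] at this
    rw [← this, absRpowInt hα hc]
  rw [← intervalIntegral.integral_add_adjacent_intervals
    (absRpowIntegrable hα (-c) 0) (absRpowIntegrable hα 0 c), hneg, absRpowInt hα hc]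
  ring

lemma shiftBound {α : ℝ} (hα : 0 < α) {x x_I r : ℝ} (hr : 0 < r)
    (hx : |x - x_I| ≤ 2 * r) :
    ∫ t in (x_I - r)..(x_I + r), |t - x| ^ (α - 1) ≤ 2 * (3 * r) ^ α / α := by
  rw [intervalIntegral.integral_comp_sub_right (fun u => |u| ^ (α - 1)) x]
  have habs := abs_le.1 hx
  calc ∫ u in (x_I - r - x)..(x_I + r - x), |u| ^ (α - 1)
      ≤ ∫ u in (-(3*r))..(3*r), |u| ^ (α - 1) := by
        refine intervalIntegral.integral_mono_interval (by linarith) (by linarith)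
          (by linarith) ?_ (absRpowIntegrable hα _ _)
        filter_upwards with u
        positivity
    _ = 2 * (3 * r) ^ α / α := absRpowIntSym hα (by linarith)

lemma inner_bound {q α : ℝ} (hα0 : 0 < α) (hα1 : α < 1) (hq0 : 0 < q)
    (b a : ℝ → ℝ) (M x_I r x : ℝ) (hM : 0 ≤ M) (hr : 0 < r) (hrπ : r < π / 4)
    (hb : ∀ x y : ℝ, |b x - b y| ≤ M * |x - y| ^ α)
    (ha_supp : ∀ t, a t ≠ 0 → |t - x_I| ≤ r)
    (ha_bdd : ∀ t, |a t| ≤ (2 * r) ^ (-(1 / q)))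
    (hx : |x - x_I| ≤ 2 * r) :
    |∫ t in (x_I - π)..(x_I + π),
        (b (x + t) - b (2 * x)) * a t / Real.tan ((x - t) / 2)| ≤
      2 * M * (2 * r) ^ (-(1 / q)) * (2 * (3 * r) ^ α / α) := by
  set K : ℝ := 2 * M * (2 * r) ^ (-(1 / q)) with hKdef
  have hK : 0 ≤ K := by positivity
  set G : ℝ → ℝ :=
    Set.indicator (Set.Icc (x_I - r) (x_I + r)) (fun t => K * |t - x| ^ (α - 1)) with hGdef
  have hGnn : ∀ t, 0 ≤ G t := fun t =>
    Set.indicator_nonneg (fun s _ => by positivity) t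
  have hGint : Integrable G := by
    refine IntegrableOn.integrable_indicator ?_ measurableSet_Icc
    rw [← intervalIntegrable_iff_integrableOn_Icc_of_le (by linarith : x_I - r ≤ x_I + r)]
    have h := ((absRpowIntegrable hα0 (x_I - r - x) (x_I + r - x)).comp_sub_right x).const_mul K
    have e1 : x_I - r - x + x = x_I - r := by ring
    have e2 : x_I + r - x + x = x_I + r := by ring
    rwa [e1, e2] at h
  have hπ := Real.pi_pos
  have hbound : ∀ t, ‖(b (x + t) - b (2 * x)) * a t / Real.tan ((x - t) / 2)‖ ≤ G t := by
    intro t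
    rw [Real.norm_eq_abs]
    by_cases hat : a t = 0
    · simp [hat, hGnn t]
    have ht1 : |t - x_I| ≤ r := ha_supp t hat
    have htI : t ∈ Set.Icc (x_I - r) (x_I + r) := by
      have := abs_le.1 ht1; constructor <;> linarith [this.1, this.2]
    have hGt : G t = K * |t - x| ^ (α - 1) := Set.indicator_of_mem htI _
    by_cases htx : t = x
    · have hz : b (x + t) - b (2 * x) = 0 := by
        rw [htx, show x + x = 2 * x by ring, sub_self]
      rw [hz, zero_mul, zero_div, abs_zero, hGt]
      positivity
    have hA : (0:ℝ) < |t - x| := abs_pos.2 (sub_ne_zero.2 htx)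
    have hA' : |x - t| = |t - x| := abs_sub_comm x t
    have h3r : |x - t| ≤ 3 * r := by
      have h1 : |x - t| ≤ |x - x_I| + |x_I - t| := abs_sub_le _ _ _
      rw [abs_sub_comm x_I t] at h1
      linarith
    have hlt : |(x - t) / 2| < π / 2 := by
      rw [abs_div, abs_two]
      have : |x - t| < π := by linarith
      linarith [abs_nonneg (x - t)]
    have htan : |x - t| / 2 ≤ |Real.tan ((x - t) / 2)| := by
      have h := abs_le_abs_tan hlt
      rwa [abs_div, abs_two] at h
    have htanpos : 0 < |Real.tan ((x - t) / 2)| := lt_of_lt_of_le (by rw [hA']; linarith) htan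
    have hnum : |b (x + t) - b (2 * x)| ≤ M * |t - x| ^ α := by
      have := hb (x + t) (2 * x)
      rwa [show x + t - 2 * x = t - x by ring] at this
    rw [abs_div, abs_mul, hGt]
    calc |b (x + t) - b (2 * x)| * |a t| / |Real.tan ((x - t) / 2)|
        ≤ M * |t - x| ^ α * ((2 * r) ^ (-(1 / q))) / (|x - t| / 2) := by
          apply div_le_div₀ (by positivity) ?_ (by rw [hA']; linarith) htan
          exact mul_le_mul hnum (ha_bdd t) (abs_nonneg _) (by positivity)
      _ = K * |t - x| ^ (α - 1) := by
          rw [hA', Real.rpow_sub hA, Real.rpow_one, hKdef]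
          field_simp
  have hmain := intervalIntegral.norm_integral_le_of_norm_le (μ := volume)
    (f := fun t => (b (x + t) - b (2 * x)) * a t / Real.tan ((x - t) / 2))
    (a := x_I - π) (b := x_I + π) (g := G) (by linarith)
    (Filter.Eventually.of_forall fun t _ => hbound t) hGint.intervalIntegrable
  rw [Real.norm_eq_abs] at hmain
  refine hmain.trans ?_
  have hstep : |∫ t in (x_I - π)..(x_I + π), G t| ≤ K * (2 * (3 * r) ^ α / α) := by
    rw [abs_of_nonneg (intervalIntegral.integral_nonneg (by linarith) fun u _ => hGnn u)]
    rw [intervalIntegral.integral_of_le (by linarith : x_I - π ≤ x_I + π)]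
    calc ∫ t in Set.Ioc (x_I - π) (x_I + π), G t
        ≤ ∫ t, G t := setIntegral_le_integral hGint (Filter.Eventually.of_forall hGnn)
      _ = ∫ t in Set.Icc (x_I - r) (x_I + r), K * |t - x| ^ (α - 1) := by
          rw [hGdef, MeasureTheory.integral_indicator measurableSet_Icc]
      _ = ∫ t in (x_I - r)..(x_I + r), K * |t - x| ^ (α - 1) := by
          rw [integral_Icc_eq_integral_Ioc,
            intervalIntegral.integral_of_le (by linarith : x_I - r ≤ x_I + r)]
      _ = K * ∫ t in (x_I - r)..(x_I + r), |t - x| ^ (α - 1) :=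
          intervalIntegral.integral_const_mul K _
      _ ≤ K * (2 * (3 * r) ^ α / α) :=
          mul_le_mul_of_nonneg_left (shiftBound hα0 hr hx) hK
  exact (le_abs_self _).trans hstep

/-- **Local part estimate.** For `0 < α < 1`, `1 < p < ∞`, `0 < q ≤ 1`, `α = 1/q - 1/p`,
`b ∈ Λ_α(𝕋)` with seminorm `M`, and `a` an `H^q`-atom on the interval `I` of center `x_I` and
radius `r < π/4`, the local part `A_1 = 1_{Ĩ} · ∫ (b(x+t)-b(2x)) a(t)/tan((x-t)/2) dt`
satisfies `‖A_1‖_{L^p} ≤ C M`, with `C` independent of the atom. -/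
theorem local_part_estimate (p q α : ℝ) (hα0 : 0 < α) (hα1 : α < 1) (hp : 1 < p)
    (hq0 : 0 < q) (hq1 : q ≤ 1) (hα : α = 1 / q - 1 / p) :
    ∃ C > 0, ∀ (b a : ℝ → ℝ) (M x_I r : ℝ), 0 ≤ M → 0 < r → r < π / 4 →
      Function.Periodic b (2 * π) →
      (∀ x y : ℝ, |b x - b y| ≤ M * |x - y| ^ α) →
      IsHqAtom q x_I r a →
      (∫ x in (x_I - 2 * r)..(x_I + 2 * r),
          |∫ t in (x_I - π)..(x_I + π),
            (b (x + t) - b (2 * x)) * a t / Real.tan ((x - t) / 2)| ^ p) ^ (1 / p) ≤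
        C * M := by
  have hp0 : (0:ℝ) < p := by linarith
  refine ⟨(4:ℝ) ^ (1/p) * (4 * 3 ^ α * 2 ^ (-(1/q)) / α), by positivity, ?_⟩
  intro b a M x_I r hM hr hrπ _hper hb ⟨_, ha_supp, ha_bdd, _⟩
  set B : ℝ := 2 * M * (2 * r) ^ (-(1 / q)) * (2 * (3 * r) ^ α / α) with hBdef
  have hB : 0 ≤ B := by positivity
  set S : ℝ := ∫ x in (x_I - 2 * r)..(x_I + 2 * r),
      |∫ t in (x_I - π)..(x_I + π),
        (b (x + t) - b (2 * x)) * a t / Real.tan ((x - t) / 2)| ^ p with hSdef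
  have hS0 : 0 ≤ S :=
    intervalIntegral.integral_nonneg (by linarith) fun x _ =>
      Real.rpow_nonneg (abs_nonneg _) p
  have hSB : S ≤ B ^ p * (4 * r) := by
    have h := intervalIntegral.norm_integral_le_of_norm_le_const
      (a := x_I - 2 * r) (b := x_I + 2 * r) (C := B ^ p)
      (f := fun x => |∫ t in (x_I - π)..(x_I + π),
        (b (x + t) - b (2 * x)) * a t / Real.tan ((x - t) / 2)| ^ p) ?_
    · have he : |x_I + 2 * r - (x_I - 2 * r)| = 4 * r := by
        rw [abs_of_nonneg (by linarith)]; ring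
      rw [he] at h
      exact (le_abs_self S).trans (by rwa [Real.norm_eq_abs] at h)
    · intro x hxI
      rw [Set.uIoc_of_le (by linarith : x_I - 2 * r ≤ x_I + 2 * r)] at hxI
      have hx : |x - x_I| ≤ 2 * r := by
        rw [abs_le]; constructor <;> [linarith [hxI.1]; linarith [hxI.2]]
      have hib := inner_bound hα0 hα1 hq0 b a M x_I r x hM hr hrπ hb ha_supp ha_bdd hx
      rw [Real.norm_eq_abs, abs_of_nonneg (Real.rpow_nonneg (abs_nonneg _) p)]
      exact Real.rpow_le_rpow (abs_nonneg _) hib hp0.le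
  calc S ^ (1/p) ≤ (B ^ p * (4 * r)) ^ (1/p) :=
        Real.rpow_le_rpow hS0 hSB (by positivity)
    _ = B * (4 * r) ^ (1/p) := by
        rw [Real.mul_rpow (Real.rpow_nonneg hB p) (by positivity),
          ← Real.rpow_mul hB, mul_one_div_cancel hp0.ne', Real.rpow_one]
    _ = (4:ℝ) ^ (1/p) * (4 * 3 ^ α * 2 ^ (-(1/q)) / α) * M := by
        have h2r : (2*r) ^ (-(1/q)) = 2 ^ (-(1/q)) * r ^ (-(1/q)) :=
          Real.mul_rpow (by norm_num) hr.le
        have h3r : (3*r) ^ α = 3 ^ α * r ^ α := Real.mul_rpow (by norm_num) hr.le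
        have h4r : (4*r) ^ (1/p) = 4 ^ (1/p) * r ^ (1/p) :=
          Real.mul_rpow (by norm_num) hr.le
        have hrprod : r ^ (-(1/q)) * r ^ α * r ^ (1/p) = 1 := by
          rw [← Real.rpow_add hr, ← Real.rpow_add hr,
            show -(1/q) + α + 1/p = 0 by rw [hα]; ring, Real.rpow_zero]
        rw [hBdef, h2r, h3r, h4r]
        linear_combination (4 * M * 2 ^ (-(1/q)) * (3:ℝ) ^ α * (4:ℝ) ^ (1/p) / α) * hrprod
end

section
/- Let 0 < α < 1, 0 < q ≤ 1, 1 < p < ∞ with α = 1/q − 1/p, and b ∈ Λ_α(T). Let a be an H^q-atom supported in interval I centered at x_I of radius r < π/4. Then for x outside Ĩ (the interval of radius 2r around x_I), the term A_2^{(1)}(x) = ∫_T (b(x+t) − b(x+x_I)) a(t)/tan((x−t)/2) dt satisfies |A_2^{(1)}(x)| ≤ C ‖b‖_{Λ_α} |I|^{α+1−1/q} / |x−x_I|, and consequently ‖A_2^{(1)}‖_{L^p} ≤ C ‖b‖_{Λ_α}. -/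
open MeasureTheory Real

lemma measurable_tan' : Measurable Real.tan := by
  have : Real.tan = fun x => Real.sin x / Real.cos x := funext Real.tan_eq_sin_div_cos
  rw [this]; exact Real.measurable_sin.div Real.measurable_cos

lemma intervalIntegrable_of_bound {f : ℝ → ℝ} (hf : Measurable f) (a b B : ℝ)
    (h : ∀ t ∈ Set.uIoc a b, |f t| ≤ B) : IntervalIntegrable f volume a b := by
  rw [intervalIntegrable_iff]
  refine Integrable.mono' (g := fun _ => B) (f := f)
    (integrableOn_const measure_Ioc_lt_top.ne)
    (hf.aestronglyMeasurable.restrict) ?_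
  rw [ae_restrict_iff' measurableSet_uIoc]
  exact Filter.Eventually.of_forall fun t ht => by simpa using h t ht

lemma holder_continuous {b : ℝ → ℝ} {M α : ℝ} (hα : 0 < α)
    (hb : ∀ x y : ℝ, |b x - b y| ≤ M * |x - y| ^ α) : Continuous b := by
  rw [continuous_iff_continuousAt]
  intro x₀
  rw [ContinuousAt, tendsto_iff_dist_tendsto_zero]
  have key : Filter.Tendsto (fun x : ℝ => M * |x - x₀| ^ α) (nhds x₀) (nhds 0) := by
    have h1 : Filter.Tendsto (fun x : ℝ => |x - x₀|) (nhds x₀) (nhds 0) := by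
      have hc : Continuous fun x : ℝ => |x - x₀| :=
        (continuous_id.sub continuous_const).abs
      simpa using hc.tendsto x₀
    have h2 : Filter.Tendsto (fun y : ℝ => M * y ^ α) (nhds 0) (nhds 0) := by
      have hc := (Real.continuousAt_rpow_const 0 α (Or.inr hα.le)).tendsto
      rw [Real.zero_rpow hα.ne'] at hc
      simpa using hc.const_mul M
    exact h2.comp h1
  refine squeeze_zero (fun x => dist_nonneg) (fun x => ?_) key
  simpa [Real.dist_eq] using hb x x₀

lemma abs_tan_abs (u : ℝ) : |Real.tan (|u|)| = |Real.tan u| := by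
  rcases abs_cases u with ⟨h, _⟩ | ⟨h, _⟩ <;> rw [h] <;> simp [Real.tan_neg]

lemma abs_tan_lower {d u : ℝ} (hd0 : 0 < d) (hdπ : d ≤ π) (h1 : d/4 ≤ |u|)
    (h2 : |u| ≤ 3*π/4) (hne : Real.tan u ≠ 0) : d/4 ≤ |Real.tan u| := by
  rw [← abs_tan_abs]
  set v := |u| with hv
  have hv0 : 0 < v := lt_of_lt_of_le (by linarith) h1
  have hne' : Real.tan v ≠ 0 := by
    rw [← abs_ne_zero, abs_tan_abs, abs_ne_zero]; exact hne
  rcases lt_trichotomy v (π/2) with hlt | heq | hgt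
  · have ht := Real.lt_tan hv0 hlt
    rw [abs_of_pos (Real.tan_pos_of_pos_of_lt_pi_div_two hv0 hlt)]
    linarith
  · exact absurd (heq ▸ Real.tan_pi_div_two) hne'
  · have hπ := Real.pi_pos
    set w := π - v with hw
    have hw1 : π/4 ≤ w := by rw [hw]; linarith
    have hw2 : w < π/2 := by rw [hw]; linarith
    have htw : Real.tan w = -Real.tan v := by
      rw [hw, Real.tan_pi_sub]
    have h1tan : 1 ≤ Real.tan w := by
      rcases eq_or_lt_of_le hw1 with he | hl
      · rw [← he, Real.tan_pi_div_four]
      · have := Real.tan_lt_tan_of_nonneg_of_lt_pi_div_two (by positivity) hw2 hl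
        rw [Real.tan_pi_div_four] at this; linarith
    have : |Real.tan v| = Real.tan w := by
      rw [abs_of_neg]
      · linarith [htw]
      · nlinarith [htw]
    rw [this]
    have h4 : π < 4 := by nlinarith [Real.pi_lt_d2]
    linarith

/-- **Estimate of `A_2^{(1)}`.** For `0 < α < 1`, `0 < q ≤ 1`, `1 < p < ∞`, `α = 1/q - 1/p`,
`b ∈ Λ_α` with seminorm `M` and `a` an `H^q`-atom on the interval `I` of center `x_I` and radius
`r < π/4`: for `x` outside `Ĩ`, `|A_2^{(1)}(x)| ≤ C M |I|^{α+1-1/q} / |x - x_I|`, and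
consequently `‖A_2^{(1)}‖_{L^p} ≤ C M`. -/
theorem A21_estimate (p q α : ℝ) (hα0 : 0 < α) (hα1 : α < 1) (hq0 : 0 < q) (hq1 : q ≤ 1)
    (hp : 1 < p) (hα : α = 1 / q - 1 / p) :
    ∃ C > 0, ∀ (b a : ℝ → ℝ) (M x_I r : ℝ), 0 ≤ M → 0 < r → r < π / 4 →
      Function.Periodic b (2 * π) →
      (∀ x y : ℝ, |b x - b y| ≤ M * |x - y| ^ α) →
      IsHqAtom q x_I r a →
      (∀ x : ℝ, 2 * r ≤ |x - x_I| → |x - x_I| ≤ π →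
        |∫ t in (x_I - π)..(x_I + π),
            (b (x + t) - b (x + x_I)) * a t / Real.tan ((x - t) / 2)| ≤
          C * M * (2 * r) ^ (α + 1 - 1 / q) / |x - x_I|) ∧
      (∫ x in (x_I - π)..(x_I + π),
          (if 2 * r ≤ |x - x_I| then
            |∫ t in (x_I - π)..(x_I + π),
              (b (x + t) - b (x + x_I)) * a t / Real.tan ((x - t) / 2)|
          else 0) ^ p) ^ (1 / p) ≤ C * M := by
  have hp0 : (0:ℝ) < p := lt_trans one_pos hp
  have hfacpos : (0:ℝ) < (2*p/(p-1)) ^ (1/p) :=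
    Real.rpow_pos_of_pos (div_pos (by linarith) (by linarith)) _
  have hCfac : (1:ℝ) ≤ (2*p/(p-1)) ^ (1/p) :=
    Real.one_le_rpow (by rw [le_div_iff₀ (by linarith)]; linarith) (by positivity)
  refine ⟨4 * (2*p/(p-1)) ^ (1/p), by linarith, ?_⟩
  set C : ℝ := 4 * (2*p/(p-1)) ^ (1/p) with hC
  have h4C : (4:ℝ) ≤ C := by nlinarith
  intro b a M x_I r hM hr hrπ hper hb ha
  obtain ⟨hameas, hsupp, habd, -⟩ := ha
  have hπ := Real.pi_pos
  have h2r : (0:ℝ) < 2*r := by linarith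
  have hbcont : Continuous b := holder_continuous hα0 hb
  have hKnn : (0:ℝ) ≤ 4 * M * (2*r) ^ (α + 1 - 1/q) := by positivity
  -- the key pointwise estimate
  have key : ∀ x : ℝ, 2 * r ≤ |x - x_I| → |x - x_I| ≤ π →
      |∫ t in (x_I - π)..(x_I + π),
          (b (x + t) - b (x + x_I)) * a t / Real.tan ((x - t) / 2)| ≤
        4 * M * (2*r) ^ (α + 1 - 1/q) / |x - x_I| := by
    intro x hd1 hd2
    set d := |x - x_I| with hdd
    have hd0 : (0:ℝ) < d := lt_of_lt_of_le h2r hd1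
    set g : ℝ → ℝ := fun t => (b (x + t) - b (x + x_I)) * a t / Real.tan ((x - t) / 2)
      with hg
    set B : ℝ := M * (2*r)^α * (2*r)^(-(1/q)) * (4/d) with hB
    have hBnn : (0:ℝ) ≤ B := by
      have := Real.rpow_nonneg h2r.le α
      have := Real.rpow_nonneg h2r.le (-(1/q))
      have h4d : (0:ℝ) ≤ 4/d := by positivity
      positivity
    have hboundall : ∀ t, |g t| ≤ B := by
      intro t
      by_cases h0 : a t = 0
      · simpa [hg, h0] using hBnn
      have ht : |t - x_I| ≤ r := hsupp t h0
      by_cases htan : Real.tan ((x - t)/2) = 0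
      · simpa [hg, htan] using hBnn
      have hnum : |b (x+t) - b (x+x_I)| ≤ M * (2*r)^α := by
        refine le_trans (hb _ _) (mul_le_mul_of_nonneg_left ?_ hM)
        refine Real.rpow_le_rpow (abs_nonneg _) ?_ hα0.le
        have hxt : (x+t) - (x+x_I) = t - x_I := by ring
        rw [hxt]; linarith
      have habs : d - r ≤ |x - t| ∧ |x - t| ≤ d + r := by
        constructor
        · have := abs_sub_abs_le_abs_sub (x - x_I) (t - x_I)
          have hxts : (x - x_I) - (t - x_I) = x - t := by ring
          rw [hxts] at this
          linarith [le_abs_self (t - x_I), neg_abs_le (t - x_I), this]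
        · have := abs_sub (x - x_I) (t - x_I)
          have hxts : (x - x_I) - (t - x_I) = x - t := by ring
          rw [hxts] at this
          linarith
      have htan2 : d/4 ≤ |Real.tan ((x - t)/2)| := by
        refine abs_tan_lower hd0 hd2 ?_ ?_ htan
        · rw [abs_div]
          rw [abs_of_pos (by norm_num : (0:ℝ) < 2)]
          linarith [habs.1]
        · rw [abs_div, abs_of_pos (by norm_num : (0:ℝ) < 2)]
          linarith [habs.2]
      have : |g t| = |b (x+t) - b (x+x_I)| * |a t| / |Real.tan ((x - t)/2)| := by
        rw [hg]; simp [abs_div, abs_mul]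
      rw [this]
      have hnum2 : |b (x+t) - b (x+x_I)| * |a t| ≤ M * (2*r)^α * (2*r)^(-(1/q)) := by
        apply mul_le_mul hnum (habd t) (abs_nonneg _)
        positivity
      calc |b (x+t) - b (x+x_I)| * |a t| / |Real.tan ((x - t)/2)|
          ≤ (M * (2*r)^α * (2*r)^(-(1/q))) / (d/4) := by
            apply div_le_div₀ (by positivity) hnum2 (by linarith) htan2
        _ = B := by rw [hB]; field_simp
    have hmeas : Measurable g := by
      apply Measurable.div
      · exact ((hbcont.measurable.comp (measurable_const.add measurable_id)).sub
          measurable_const).mul hameas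
      · exact measurable_tan'.comp ((measurable_const.sub measurable_id).div_const 2)
    have hII : ∀ u v : ℝ, IntervalIntegrable g volume u v := fun u v =>
      intervalIntegrable_of_bound hmeas u v B (fun t _ => hboundall t)
    have hL : ∫ t in (x_I - π)..(x_I - r), g t = 0 := by
      have hae : ∀ᵐ t : ℝ, t ≠ x_I - r := by
        rw [MeasureTheory.ae_iff]; simpa using Real.volume_singleton
      have : ∫ t in (x_I - π)..(x_I - r), g t = ∫ t in (x_I - π)..(x_I - r), (0:ℝ) := by
        apply intervalIntegral.integral_congr_ae
        filter_upwards [hae] with t ht htm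
        rw [Set.uIoc_of_le (by linarith : x_I - π ≤ x_I - r)] at htm
        have htlt : t < x_I - r := lt_of_le_of_ne htm.2 ht
        have h0 : a t = 0 := by
          by_contra hne
          have := hsupp t hne
          rw [abs_le] at this
          linarith [this.1]
        simp [hg, h0]
      simpa using this
    have hR : ∫ t in (x_I + r)..(x_I + π), g t = 0 := by
      have hae : ∀ᵐ t : ℝ, t ≠ x_I + π := by
        rw [MeasureTheory.ae_iff]; simpa using Real.volume_singleton
      have : ∫ t in (x_I + r)..(x_I + π), g t = ∫ t in (x_I + r)..(x_I + π), (0:ℝ) := by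
        apply intervalIntegral.integral_congr_ae
        filter_upwards [hae] with t ht htm
        rw [Set.uIoc_of_le (by linarith : x_I + r ≤ x_I + π)] at htm
        have htgt : x_I + r < t := htm.1
        have h0 : a t = 0 := by
          by_contra hne
          have := hsupp t hne
          rw [abs_le] at this
          linarith [this.2]
        simp [hg, h0]
      simpa using this
    have hsplit : ∫ t in (x_I - π)..(x_I + π), g t
        = (∫ t in (x_I - π)..(x_I - r), g t) + (∫ t in (x_I - r)..(x_I + r), g t)
          + (∫ t in (x_I + r)..(x_I + π), g t) := by
      rw [intervalIntegral.integral_add_adjacent_intervals (hII _ _) (hII _ _),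
        intervalIntegral.integral_add_adjacent_intervals (hII _ _) (hII _ _)]
    have hmid : |∫ t in (x_I - r)..(x_I + r), g t| ≤ B * (2*r) := by
      have := intervalIntegral.norm_integral_le_of_norm_le_const
        (C := B) (f := g) (a := x_I - r) (b := x_I + r)
        (fun t _ => by rw [Real.norm_eq_abs]; exact hboundall t)
      rw [Real.norm_eq_abs] at this
      have he : |(x_I + r) - (x_I - r)| = 2*r := by
        rw [abs_of_pos (by linarith)]; ring
      rw [he] at this
      exact this
    have hBK : B * (2*r) = 4 * M * (2*r) ^ (α + 1 - 1/q) / d := by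
      have hprod : (2*r)^α * (2*r)^(-(1/q)) * (2*r) = (2*r) ^ (α + 1 - 1/q) := by
        rw [show (2*r : ℝ) ^ (α + 1 - 1/q) = (2*r) ^ (α + -(1/q) + 1) by ring_nf,
          Real.rpow_add h2r, Real.rpow_add h2r, Real.rpow_one]
      rw [hB, ← hprod]
      field_simp
    calc |∫ t in (x_I - π)..(x_I + π), g t| = |∫ t in (x_I - r)..(x_I + r), g t| := by
          rw [hsplit, hL, hR, zero_add, add_zero]
      _ ≤ B * (2*r) := hmid
      _ = 4 * M * (2*r) ^ (α + 1 - 1/q) / d := hBK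
  constructor
  · intro x hd1 hd2
    refine le_trans (key x hd1 hd2) ?_
    have hd0 : (0:ℝ) < |x - x_I| := lt_of_lt_of_le h2r hd1
    gcongr
  · -- the L^p estimate
    set K : ℝ := 4 * M * (2*r) ^ (α + 1 - 1/q) with hK
    have h2rπ : 2*r < π := by nlinarith
    set m : ℝ → ℝ := fun u => (max (2*r) |u|) ^ (-p) with hm
    have hmaxpos : ∀ u : ℝ, (0:ℝ) < max (2*r) |u| :=
      fun u => lt_of_lt_of_le h2r (le_max_left _ _)
    have hmcont : Continuous m := by
      rw [hm]
      exact (continuous_const.max continuous_abs).rpow_const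
        fun u => Or.inl (ne_of_gt (hmaxpos u))
    have hmle : ∀ u : ℝ, m u ≤ (2*r) ^ (-p) := fun u => by
      rw [hm]
      exact Real.rpow_le_rpow_of_nonpos h2r (le_max_left _ _) (by linarith)
    have hmnn : ∀ u : ℝ, 0 ≤ m u := fun u => Real.rpow_nonneg (hmaxpos u).le _
    -- nonnegativity of the integrand
    have hh0 : ∀ x : ℝ, 0 ≤ (if 2 * r ≤ |x - x_I| then
        |∫ t in (x_I - π)..(x_I + π),
          (b (x + t) - b (x + x_I)) * a t / Real.tan ((x - t) / 2)| else 0) ^ p :=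
      fun x => Real.rpow_nonneg (by split_ifs; exacts [abs_nonneg _, le_refl 0]) p
    -- comparison with G x = K^p * m (x - x_I)
    have hhG : ∀ x ∈ Set.Icc (x_I - π) (x_I + π),
        (if 2 * r ≤ |x - x_I| then
          |∫ t in (x_I - π)..(x_I + π),
            (b (x + t) - b (x + x_I)) * a t / Real.tan ((x - t) / 2)| else 0) ^ p
          ≤ K ^ p * m (x - x_I) := by
      intro x hx
      rw [Set.mem_Icc] at hx
      by_cases hcond : 2 * r ≤ |x - x_I|
      · rw [if_pos hcond]
        have hd2 : |x - x_I| ≤ π := abs_le.2 ⟨by linarith [hx.1], by linarith [hx.2]⟩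
        have hkey := key x hcond hd2
        have hmax : max (2*r) |x - x_I| = |x - x_I| := max_eq_right hcond
        have hGeq : K ^ p * m (x - x_I) = (K / |x - x_I|) ^ p := by
          rw [hm]
          simp only []
          rw [hmax, Real.div_rpow hKnn (abs_nonneg _), Real.rpow_neg (abs_nonneg _),
            div_eq_mul_inv]
        rw [hGeq]
        exact Real.rpow_le_rpow (abs_nonneg _) hkey hp0.le
      · rw [if_neg hcond, Real.zero_rpow hp0.ne']
        exact mul_nonneg (Real.rpow_nonneg hKnn p) (hmnn _)
    -- measurability of the outer integrand
    have hFmeas : Measurable (fun x : ℝ => ∫ t in (x_I - π)..(x_I + π),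
        (b (x + t) - b (x + x_I)) * a t / Real.tan ((x - t) / 2)) := by
      have hunc : Measurable (Function.uncurry fun x t : ℝ =>
          (b (x + t) - b (x + x_I)) * a t / Real.tan ((x - t) / 2)) := by
        apply Measurable.div
        · exact ((hbcont.measurable.comp (measurable_fst.add measurable_snd)).sub
            (hbcont.measurable.comp (measurable_fst.add measurable_const))).mul
            (hameas.comp measurable_snd)
        · exact measurable_tan'.comp ((measurable_fst.sub measurable_snd).div_const 2)
      have heq : (fun x : ℝ => ∫ t in (x_I - π)..(x_I + π),
            (b (x + t) - b (x + x_I)) * a t / Real.tan ((x - t) / 2))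
          = fun x : ℝ => ∫ t in Set.Ioc (x_I - π) (x_I + π),
            (b (x + t) - b (x + x_I)) * a t / Real.tan ((x - t) / 2) :=
        funext fun x => intervalIntegral.integral_of_le (by linarith)
      rw [heq]
      exact (hunc.stronglyMeasurable.integral_prod_right).measurable
    have hmeasH : Measurable (fun x : ℝ => (if 2 * r ≤ |x - x_I| then
        |∫ t in (x_I - π)..(x_I + π),
          (b (x + t) - b (x + x_I)) * a t / Real.tan ((x - t) / 2)| else 0) ^ p) := by
      have hset : MeasurableSet {x : ℝ | 2 * r ≤ |x - x_I|} :=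
        measurableSet_le measurable_const ((measurable_id.sub measurable_const).abs)
      have hrpow : Continuous (fun y : ℝ => y ^ p) :=
        continuous_id.rpow_const fun _ => Or.inr hp0.le
      exact hrpow.measurable.comp (Measurable.ite hset hFmeas.abs measurable_const)
    -- interval integrability of the outer integrand
    have hIIh : IntervalIntegrable (fun x : ℝ => (if 2 * r ≤ |x - x_I| then
        |∫ t in (x_I - π)..(x_I + π),
          (b (x + t) - b (x + x_I)) * a t / Real.tan ((x - t) / 2)| else 0) ^ p)
        volume (x_I - π) (x_I + π) := by
      apply intervalIntegrable_of_bound hmeasH _ _ (K ^ p * (2*r) ^ (-p))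
      intro t ht
      rw [Set.uIoc_of_le (by linarith : x_I - π ≤ x_I + π)] at ht
      rw [abs_of_nonneg (hh0 t)]
      exact le_trans (hhG t (Set.Ioc_subset_Icc_self ht))
        (mul_le_mul_of_nonneg_left (hmle _) (Real.rpow_nonneg hKnn p))
    have hGcont : Continuous (fun x : ℝ => K ^ p * m (x - x_I)) :=
      continuous_const.mul (hmcont.comp (continuous_id.sub continuous_const))
    have hmono : (∫ x in (x_I - π)..(x_I + π), (if 2 * r ≤ |x - x_I| then
        |∫ t in (x_I - π)..(x_I + π),
          (b (x + t) - b (x + x_I)) * a t / Real.tan ((x - t) / 2)| else 0) ^ p)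
        ≤ ∫ x in (x_I - π)..(x_I + π), K ^ p * m (x - x_I) :=
      intervalIntegral.integral_mono_on (by linarith) hIIh
        (hGcont.intervalIntegrable _ _) hhG
    -- computing the integral of the majorant
    have hGint : ∫ x in (x_I - π)..(x_I + π), K ^ p * m (x - x_I)
        = K ^ p * ∫ u in (-π)..π, m u := by
      rw [intervalIntegral.integral_const_mul]
      congr 1
      rw [intervalIntegral.integral_comp_sub_right m x_I,
        show x_I - π - x_I = -π by ring, show x_I + π - x_I = π by ring]
    have hP3 : ∫ u in (2*r)..π, m u ≤ (2*r) ^ (1-p) / (p-1) := by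
      have he : ∫ u in (2*r)..π, m u = ∫ u in (2*r)..π, u ^ (-p) := by
        apply intervalIntegral.integral_congr
        intro u hu
        rw [Set.uIcc_of_le h2rπ.le] at hu
        have hu0 : (0:ℝ) < u := lt_of_lt_of_le h2r hu.1
        rw [hm]
        simp only []
        rw [abs_of_pos hu0, max_eq_right hu.1]
      rw [he, integral_rpow (Or.inr ⟨by rw [ne_eq, neg_inj]; exact hp.ne',
        by rw [Set.uIcc_of_le h2rπ.le]; rintro ⟨h1, _⟩; linarith⟩)]
      rw [show (-p + 1 : ℝ) = 1 - p by ring]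
      rw [show (1-p:ℝ) = -(p-1) by ring, div_neg, ← neg_div, neg_sub]
      rw [show (-(p-1) : ℝ) = 1 - p by ring]
      have hπp : 0 ≤ π ^ (1-p) := Real.rpow_nonneg hπ.le _
      have h2rp : 0 ≤ (2*r) ^ (1-p) := Real.rpow_nonneg h2r.le _
      rw [div_le_div_iff_of_pos_right (by linarith : (0:ℝ) < p-1)]
      linarith
    have hP1 : ∫ u in (-π)..(-(2*r)), m u = ∫ u in (2*r)..π, m u := by
      rw [← intervalIntegral.integral_comp_neg m (a := 2*r) (b := π)]
      apply intervalIntegral.integral_congr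
      intro u _
      rw [hm]
      simp only []
      rw [abs_neg]
    have hP2 : ∫ u in (-(2*r))..(2*r), m u = 2 * (2*r) ^ (1-p) := by
      have he : ∫ u in (-(2*r))..(2*r), m u = ∫ u in (-(2*r))..(2*r), ((2*r) ^ (-p) : ℝ) := by
        apply intervalIntegral.integral_congr
        intro u hu
        rw [Set.uIcc_of_le (by linarith : -(2*r) ≤ 2*r)] at hu
        rw [hm]
        simp only []
        rw [max_eq_left (abs_le.2 ⟨hu.1, hu.2⟩)]
      rw [he, intervalIntegral.integral_const, smul_eq_mul,
        show (1-p:ℝ) = 1 + -p by ring, Real.rpow_add h2r, Real.rpow_one]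
      ring
    have hmsplit : ∫ u in (-π)..π, m u
        = (∫ u in (-π)..(-(2*r)), m u) + (∫ u in (-(2*r))..(2*r), m u)
          + (∫ u in (2*r)..π, m u) := by
      rw [intervalIntegral.integral_add_adjacent_intervals
          (hmcont.intervalIntegrable _ _) (hmcont.intervalIntegrable _ _),
        intervalIntegral.integral_add_adjacent_intervals
          (hmcont.intervalIntegrable _ _) (hmcont.intervalIntegrable _ _)]
    have hmtotal : ∫ u in (-π)..π, m u ≤ 2*p/(p-1) * (2*r) ^ (1-p) := by
      rw [hmsplit, hP1, hP2]
      have harith : 2 * (2*r) ^ (1-p) + 2 * ((2*r) ^ (1-p) / (p-1))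
          = 2*p/(p-1) * (2*r) ^ (1-p) := by
        have hp1 : p - 1 ≠ 0 := by linarith
        field_simp
        ring
      linarith [hP3]
    -- final computation
    have hInn : 0 ≤ ∫ x in (x_I - π)..(x_I + π), (if 2 * r ≤ |x - x_I| then
        |∫ t in (x_I - π)..(x_I + π),
          (b (x + t) - b (x + x_I)) * a t / Real.tan ((x - t) / 2)| else 0) ^ p :=
      intervalIntegral.integral_nonneg (by linarith) (fun u _ => hh0 u)
    have hIle : (∫ x in (x_I - π)..(x_I + π), (if 2 * r ≤ |x - x_I| then
        |∫ t in (x_I - π)..(x_I + π),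
          (b (x + t) - b (x + x_I)) * a t / Real.tan ((x - t) / 2)| else 0) ^ p)
        ≤ K ^ p * (2*p/(p-1) * (2*r) ^ (1-p)) := by
      refine le_trans hmono ?_
      rw [hGint]
      exact mul_le_mul_of_nonneg_left hmtotal (Real.rpow_nonneg hKnn p)
    have hcalc : (K ^ p * (2*p/(p-1) * (2*r) ^ (1-p))) ^ (1/p) = C * M := by
      have h2pnn : (0:ℝ) ≤ 2*p/(p-1) := div_nonneg (by linarith) (by linarith)
      rw [Real.mul_rpow (Real.rpow_nonneg hKnn p)
          (mul_nonneg h2pnn (Real.rpow_nonneg h2r.le _)),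
        Real.mul_rpow h2pnn (Real.rpow_nonneg h2r.le _),
        ← Real.rpow_mul hKnn, mul_one_div_cancel hp0.ne', Real.rpow_one,
        ← Real.rpow_mul h2r.le, hK, hC]
      have hexp : (α + 1 - 1/q) + (1-p)*(1/p) = 0 := by
        have hpp : p * (1/p) = 1 := mul_one_div_cancel hp0.ne'
        rw [hα]
        linear_combination -hpp
      calc 4 * M * (2*r) ^ (α + 1 - 1/q) * ((2*p/(p-1)) ^ (1/p) * (2*r) ^ ((1-p)*(1/p)))
          = 4 * (2*p/(p-1)) ^ (1/p) * M
            * ((2*r) ^ (α + 1 - 1/q) * (2*r) ^ ((1-p)*(1/p))) := by ring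
        _ = 4 * (2*p/(p-1)) ^ (1/p) * M * (2*r) ^ ((α + 1 - 1/q) + (1-p)*(1/p)) := by
            rw [← Real.rpow_add h2r]
        _ = 4 * (2*p/(p-1)) ^ (1/p) * M := by rw [hexp, Real.rpow_zero, mul_one]
        _ = 4 * (2*p/(p-1)) ^ (1/p) * M := by ring
    calc (∫ x in (x_I - π)..(x_I + π), (if 2 * r ≤ |x - x_I| then
          |∫ t in (x_I - π)..(x_I + π),
            (b (x + t) - b (x + x_I)) * a t / Real.tan ((x - t) / 2)| else 0) ^ p) ^ (1/p)
        ≤ (K ^ p * (2*p/(p-1) * (2*r) ^ (1-p))) ^ (1/p) :=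
          Real.rpow_le_rpow hInn hIle (by positivity)
      _ = C * M := hcalc
end

section
/- Let q ≤ 1 and m = [1/q] − 1. Let a be an H^q-atom supported in an interval I centered at x_I of radius r < π/4 (so a has vanishing moments up to order m). Then for x outside Ĩ, |∫_T a(t)/tan((x−t)/2) dt| ≤ C |I|^{m+1−1/q + 1} / |x−x_I|^{m+2}, where the estimate comes from subtracting the degree-m Taylor polynomial of t ↦ 1/tan((x−t)/2) at x_I. -/
open MeasureTheory Real

section Aux

open Set Polynomial

lemma sin_lb {u : ℝ} (hu0 : 0 < u) (hu : u ≤ 5 * π / 8) : u / π ≤ Real.sin u := by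
  have hπ := Real.pi_gt_three
  rcases le_or_gt u (π / 2) with h | h
  · have h1 := Real.mul_le_sin hu0.le h
    have h2 : u / π ≤ 2 / π * u := by
      rw [div_le_iff₀ (by linarith), mul_comm (2 / π) u, mul_assoc]
      have : (1 : ℝ) ≤ 2 / π * π := by
        rw [div_mul_cancel₀]; · norm_num
        · linarith
      nlinarith
    linarith
  · have h1 : Real.sin u = Real.cos (u - π / 2) := (Real.cos_sub_pi_div_two u).symm
    have h2 : Real.cos (π / 8) ≤ Real.cos (u - π / 2) :=
      Real.cos_le_cos_of_nonneg_of_le_pi (by linarith) (by linarith) (by linarith)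
    have h3 : Real.cos (π / 4) ≤ Real.cos (π / 8) :=
      Real.cos_le_cos_of_nonneg_of_le_pi (by positivity) (by linarith) (by linarith)
    have h4 : Real.cos (π / 4) = Real.sqrt 2 / 2 := Real.cos_pi_div_four
    have h5 : (1.4 : ℝ) ≤ Real.sqrt 2 := by
      rw [show (1.4 : ℝ) = Real.sqrt (1.4 ^ 2) by rw [Real.sqrt_sq]; norm_num]
      exact Real.sqrt_le_sqrt (by norm_num)
    have h6 : u / π ≤ 5 / 8 := by
      rw [div_le_iff₀ (by linarith)]; nlinarith
    nlinarith

lemma abs_sin_lb {u : ℝ} (hu0 : u ≠ 0) (hu : |u| ≤ 5 * π / 8) :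
    |u| / π ≤ |Real.sin u| := by
  rcases lt_or_gt_of_ne hu0 with h | h
  · rw [abs_of_neg h] at hu ⊢
    calc -u / π ≤ Real.sin (-u) := sin_lb (by linarith) hu
      _ ≤ |Real.sin (-u)| := le_abs_self _
      _ = |Real.sin u| := by rw [Real.sin_neg, abs_neg]
  · rw [abs_of_pos h] at hu ⊢
    calc u / π ≤ Real.sin u := sin_lb h hu
      _ ≤ |Real.sin u| := le_abs_self _

lemma abs_cot_le {u : ℝ} (hu0 : u ≠ 0) (hu : |u| ≤ 5 * π / 8) :
    |Real.cos u / Real.sin u| ≤ π / |u| := by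
  have hπ := Real.pi_gt_three
  have habs : 0 < |u| := abs_pos.2 hu0
  have hsin : |u| / π ≤ |Real.sin u| := abs_sin_lb hu0 hu
  have hsinpos : 0 < |Real.sin u| := lt_of_lt_of_le (by positivity) hsin
  rw [abs_div, div_le_div_iff₀ hsinpos habs]
  have h7 : |u| ≤ π * |Real.sin u| := by
    rw [div_le_iff₀ (by linarith)] at hsin
    linarith
  calc |Real.cos u| * |u| ≤ 1 * |u| := by gcongr; exact Real.abs_cos_le_one u
    _ = |u| := one_mul _
    _ ≤ π * |Real.sin u| := h7

lemma sin_ne_zero_of_small {u : ℝ} (hu0 : u ≠ 0) (hu : |u| ≤ 5 * π / 8) :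
    Real.sin u ≠ 0 := by
  have h := abs_sin_lb hu0 hu
  have hπ := Real.pi_pos
  have : 0 < |Real.sin u| := lt_of_lt_of_le (by positivity) h
  exact abs_pos.mp this

noncomputable def cotPoly : ℕ → Polynomial ℝ
  | 0 => Polynomial.X
  | n + 1 => (cotPoly n).derivative * (Polynomial.C (1/2 : ℝ) * (1 + Polynomial.X ^ 2))

lemma cotPoly_natDegree (n : ℕ) : (cotPoly n).natDegree ≤ n + 1 := by
  induction n with
  | zero => simp [cotPoly]
  | succ k ih =>
    rw [cotPoly]
    apply le_trans (Polynomial.natDegree_mul_le)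
    have h1 : ((cotPoly k).derivative).natDegree ≤ k := by
      apply le_trans (Polynomial.natDegree_derivative_le _)
      omega
    have h2 : (Polynomial.C (1/2 : ℝ) * (1 + Polynomial.X ^ 2)).natDegree ≤ 2 := by
      compute_degree
    omega

/-- The function `t ↦ cot ((x - t)/2)`. -/
noncomputable def cotF (x t : ℝ) : ℝ := Real.cos ((x - t) / 2) / Real.sin ((x - t) / 2)

lemma cotF_hasDerivAt (x t : ℝ) (hs : Real.sin ((x - t) / 2) ≠ 0) :
    HasDerivAt (cotF x) ((1 + (cotF x t) ^ 2) / 2) t := by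
  have hg : HasDerivAt (fun s : ℝ => (x - s) / 2) (-(1/2)) t := by
    have := ((hasDerivAt_id t).const_sub x).div_const 2
    exact this.congr_deriv (by norm_num)
  have hc : HasDerivAt (fun s : ℝ => Real.cos ((x - s) / 2))
      (-Real.sin ((x - t) / 2) * -(1/2)) t :=
    (Real.hasDerivAt_cos _).comp t hg
  have hsn : HasDerivAt (fun s : ℝ => Real.sin ((x - s) / 2))
      (Real.cos ((x - t) / 2) * -(1/2)) t :=
    (Real.hasDerivAt_sin _).comp t hg
  have h := hc.div hsn hs
  refine h.congr_deriv ?_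
  have hpy := Real.sin_sq_add_cos_sq ((x - t) / 2)
  unfold cotF
  field_simp
  nlinarith [hpy]

lemma cotF_iteratedDeriv (x : ℝ) (n : ℕ) :
    ∀ t, Real.sin ((x - t) / 2) ≠ 0 →
      iteratedDeriv n (cotF x) t = (cotPoly n).eval (cotF x t) := by
  induction n with
  | zero => intro t _; simp [cotPoly]
  | succ k ih =>
    intro t ht
    rw [iteratedDeriv_succ]
    have hopen : IsOpen {s : ℝ | Real.sin ((x - s) / 2) ≠ 0} := by
      apply isOpen_ne.preimage
      fun_prop
    have hev : iteratedDeriv k (cotF x) =ᶠ[nhds t] fun s => (cotPoly k).eval (cotF x s) := by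
      filter_upwards [hopen.mem_nhds ht] with s hs
      exact ih s hs
    rw [hev.deriv_eq]
    have hd : HasDerivAt (fun s => (cotPoly k).eval (cotF x s))
        ((cotPoly k).derivative.eval (cotF x t) * ((1 + (cotF x t) ^ 2) / 2)) t :=
      ((cotPoly k).hasDerivAt (cotF x t)).comp t (cotF_hasDerivAt x t ht)
    rw [hd.deriv]
    rw [cotPoly]
    simp only [Polynomial.eval_mul, Polynomial.eval_add, Polynomial.eval_one,
      Polynomial.eval_pow, Polynomial.eval_X, Polynomial.eval_C]
    ring

lemma cotF_contDiffOn (x : ℝ) (n : ℕ) :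
    ContDiffOn ℝ n (cotF x) {t : ℝ | Real.sin ((x - t) / 2) ≠ 0} := by
  apply ContDiffOn.div
  · exact (Real.contDiff_cos.comp
      ((contDiff_const.sub contDiff_id).div_const 2)).contDiffOn
  · exact (Real.contDiff_sin.comp
      ((contDiff_const.sub contDiff_id).div_const 2)).contDiffOn
  · exact fun t ht => ht

lemma poly_eval_bound (p : Polynomial ℝ) (d : ℕ) (hd : p.natDegree ≤ d) {y B : ℝ}
    (hB : 1 ≤ B) (hy : |y| ≤ B) :
    |p.eval y| ≤ (∑ i ∈ Finset.range (d + 1), |p.coeff i|) * B ^ d := by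
  rw [Polynomial.eval_eq_sum_range' (lt_of_le_of_lt hd (lt_add_one d)) y]
  calc |∑ i ∈ Finset.range (d + 1), p.coeff i * y ^ i|
      ≤ ∑ i ∈ Finset.range (d + 1), |p.coeff i * y ^ i| := Finset.abs_sum_le_sum_abs _ _
    _ ≤ ∑ i ∈ Finset.range (d + 1), |p.coeff i| * B ^ d := by
        apply Finset.sum_le_sum
        intro i hi
        rw [abs_mul, abs_pow]
        refine mul_le_mul_of_nonneg_left ?_ (abs_nonneg _)
        calc |y| ^ i ≤ B ^ i := by gcongr
          _ ≤ B ^ d := pow_le_pow_right₀ hB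
              (Nat.lt_succ_iff.mp (Finset.mem_range.mp hi))
    _ = (∑ i ∈ Finset.range (d + 1), |p.coeff i|) * B ^ d := by
        rw [Finset.sum_mul]

lemma iteratedDerivWithin_eq_of_contDiffOn {f : ℝ → ℝ} {U s : Set ℝ} {n m : ℕ}
    (hU : IsOpen U) (hsU : s ⊆ U) (hs : UniqueDiffOn ℝ s)
    (hf : ContDiffOn ℝ n f U) (hmn : m ≤ n) {x : ℝ} (hx : x ∈ s) :
    iteratedDerivWithin m f s x = iteratedDeriv m f x := by
  have H : HasFTaylorSeriesUpToOn n f (ftaylorSeriesWithin ℝ f U) s :=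
    (hf.ftaylorSeriesWithin hU.uniqueDiffOn).mono hsU
  have h1 : ftaylorSeriesWithin ℝ f U x m = iteratedFDerivWithin ℝ m f s x :=
    H.eq_iteratedFDerivWithin_of_uniqueDiffOn (by exact_mod_cast hmn) hs hx
  have h2 : ftaylorSeriesWithin ℝ f U x m = iteratedFDerivWithin ℝ m f U x := rfl
  have h3 : iteratedFDerivWithin ℝ m f U x = iteratedFDeriv ℝ m f x :=
    iteratedFDerivWithin_of_isOpen m hU (hsU hx)
  rw [iteratedDerivWithin_eq_iteratedFDerivWithin, iteratedDeriv_eq_iteratedFDeriv,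
    ← h1, h2, h3]

lemma integrable_mul_of_bounded {a : ℝ → ℝ} {A : ℝ} (ha : Measurable a)
    (hA : ∀ t, |a t| ≤ A) {g : ℝ → ℝ} {c d : ℝ} (hg : ContinuousOn g (Set.uIcc c d)) :
    IntervalIntegrable (fun t => a t * g t) volume c d := by
  obtain ⟨M, hM⟩ := isCompact_uIcc.exists_bound_of_continuousOn hg
  have hA0 : 0 ≤ A := le_trans (abs_nonneg _) (hA c)
  have hM0 : 0 ≤ M := le_trans (norm_nonneg _) (hM c Set.left_mem_uIcc)
  apply IntervalIntegrable.mono_fun (g := fun t => a t * g t)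
    (intervalIntegrable_const (c := A * M))
  · exact (ha.aestronglyMeasurable.mono_measure Measure.restrict_le_self).mul
      ((hg.mono Set.uIoc_subset_uIcc).aestronglyMeasurable measurableSet_uIoc)
  · filter_upwards [MeasureTheory.ae_restrict_mem measurableSet_uIoc] with t ht
    have h1 : |g t| ≤ M := hM t (Set.uIoc_subset_uIcc ht)
    have : |a t * g t| ≤ A * M := by
      rw [abs_mul]
      exact mul_le_mul (hA t) h1 (abs_nonneg _) hA0
    rw [Real.norm_eq_abs, Real.norm_eq_abs, abs_of_nonneg (mul_nonneg hA0 hM0)]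
    exact this

lemma integral_mul_sub_pow_eq_zero {a : ℝ → ℝ} {A lo hi : ℝ} (ha : Measurable a)
    (hA : ∀ t, |a t| ≤ A) (k : ℕ)
    (hmom : ∀ j : ℕ, j ≤ k → ∫ t in lo..hi, a t * t ^ j = 0) :
    ∫ t in lo..hi, a t * (t - lo) ^ k = 0 := by
  have hrw : ∀ t : ℝ, a t * (t - lo) ^ k =
      ∑ j ∈ Finset.range (k + 1),
        ((-1 : ℝ) ^ (j + k) * lo ^ (k - j) * (k.choose j : ℝ)) * (a t * t ^ j) := by
    intro t
    rw [sub_pow, Finset.mul_sum]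
    apply Finset.sum_congr rfl
    intros; ring
  have hint : ∀ j : ℕ, j ∈ Finset.range (k + 1) → IntervalIntegrable
      (fun t => ((-1 : ℝ) ^ (j + k) * lo ^ (k - j) * (k.choose j : ℝ)) * (a t * t ^ j))
      volume lo hi := by
    intro j _
    exact (integrable_mul_of_bounded ha hA ((continuous_pow j).continuousOn)).const_mul _
  calc ∫ t in lo..hi, a t * (t - lo) ^ k
      = ∫ t in lo..hi, ∑ j ∈ Finset.range (k + 1),
          ((-1 : ℝ) ^ (j + k) * lo ^ (k - j) * (k.choose j : ℝ)) * (a t * t ^ j) := by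
        simp_rw [hrw]
    _ = ∑ j ∈ Finset.range (k + 1), ∫ t in lo..hi,
          ((-1 : ℝ) ^ (j + k) * lo ^ (k - j) * (k.choose j : ℝ)) * (a t * t ^ j) :=
        intervalIntegral.integral_finset_sum hint
    _ = 0 := by
        apply Finset.sum_eq_zero
        intro j hj
        rw [intervalIntegral.integral_const_mul,
          hmom j (Nat.lt_succ_iff.mp (Finset.mem_range.mp hj)), mul_zero]

lemma integral_mul_polysum_eq_zero {a : ℝ → ℝ} {A lo hi : ℝ} (ha : Measurable a)
    (hA : ∀ t, |a t| ≤ A) (m : ℕ) (c : ℕ → ℝ)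
    (hmom : ∀ j : ℕ, j ≤ m → ∫ t in lo..hi, a t * t ^ j = 0) :
    ∫ t in lo..hi, a t * (∑ k ∈ Finset.range (m + 1),
      ((k.factorial : ℝ)⁻¹ * (t - lo) ^ k) * c k) = 0 := by
  have hrw : ∀ t : ℝ, a t * (∑ k ∈ Finset.range (m + 1),
      ((k.factorial : ℝ)⁻¹ * (t - lo) ^ k) * c k) =
      ∑ k ∈ Finset.range (m + 1), ((k.factorial : ℝ)⁻¹ * c k) * (a t * (t - lo) ^ k) := by
    intro t
    rw [Finset.mul_sum]
    apply Finset.sum_congr rfl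
    intros; ring
  have hint : ∀ k : ℕ, k ∈ Finset.range (m + 1) → IntervalIntegrable
      (fun t => ((k.factorial : ℝ)⁻¹ * c k) * (a t * (t - lo) ^ k)) volume lo hi := by
    intro k _
    exact (integrable_mul_of_bounded ha hA
      (((continuous_id.sub continuous_const).pow k).continuousOn)).const_mul _
  calc ∫ t in lo..hi, a t * (∑ k ∈ Finset.range (m + 1),
        ((k.factorial : ℝ)⁻¹ * (t - lo) ^ k) * c k)
      = ∫ t in lo..hi, ∑ k ∈ Finset.range (m + 1),
          ((k.factorial : ℝ)⁻¹ * c k) * (a t * (t - lo) ^ k) := by simp_rw [hrw]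
    _ = ∑ k ∈ Finset.range (m + 1), ∫ t in lo..hi,
          ((k.factorial : ℝ)⁻¹ * c k) * (a t * (t - lo) ^ k) :=
        intervalIntegral.integral_finset_sum hint
    _ = 0 := by
        apply Finset.sum_eq_zero
        intro k hk
        rw [intervalIntegral.integral_const_mul,
          integral_mul_sub_pow_eq_zero ha hA k
            (fun j hj => hmom j (le_trans hj (Nat.lt_succ_iff.mp (Finset.mem_range.mp hk)))),
          mul_zero]

end Aux

/-- **Moment estimate.** Let `0 < q ≤ 1` and `m = [1/q] - 1`. For an `H^q`-atom `a` supported in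
the interval `I` of center `x_I` and radius `r < π/4` and `x` outside `Ĩ` (on the torus),
`|∫ a(t)/tan((x-t)/2) dt| ≤ C |I|^{m+2-1/q} / |x - x_I|^{m+2}`. -/
theorem atom_moment_estimate (q : ℝ) (m : ℕ) (hq0 : 0 < q) (hq1 : q ≤ 1)
    (hm : (m : ℝ) = (⌊1 / q⌋ : ℤ) - 1) :
    ∃ C > 0, ∀ (a : ℝ → ℝ) (x_I r x : ℝ), 0 < r → r < π / 4 →
      IsHqAtom q x_I r a →
      2 * r ≤ |x - x_I| → |x - x_I| ≤ π →
      |∫ t in (x_I - r)..(x_I + r), a t / Real.tan ((x - t) / 2)| ≤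
        C * (2 * r) ^ ((m : ℝ) + 2 - 1 / q) / |x - x_I| ^ (m + 2) := by
  classical
  have hπ := Real.pi_gt_three
  set p := cotPoly (m + 1) with hp
  set S : ℝ := (∑ i ∈ Finset.range (m + 3), |p.coeff i|) + 1 with hSdef
  have hS : 0 < S := by positivity
  have hSsum : (∑ i ∈ Finset.range (m + 3), |p.coeff i|) ≤ S := by
    rw [hSdef]; linarith
  refine ⟨S * (4 * π) ^ (m + 2) / m.factorial, by positivity, ?_⟩
  intro a x_I r x hr hrπ hatom hfar hnear
  obtain ⟨ha_meas, _, ha_bd, ha_mom⟩ := hatom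
  set D := |x - x_I| with hDdef
  have hD0 : 0 < D := lt_of_lt_of_le (by linarith) hfar
  set lo := x_I - r with hlo
  set hi := x_I + r with hhi
  have hlohi : lo < hi := by rw [hlo, hhi]; linarith
  have hab : lo ≤ hi := hlohi.le
  -- distance estimates on the interval
  have hdist : ∀ t ∈ Set.Icc lo hi, D / 2 ≤ |x - t| ∧ |x - t| ≤ 5 * π / 4 := by
    intro t ht
    have ht1 : |t - x_I| ≤ r := by
      rw [abs_le]
      constructor
      · have := ht.1; rw [hlo] at this; linarith
      · have := ht.2; rw [hhi] at this; linarith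
    constructor
    · have htri : D ≤ |x - t| + |t - x_I| := by
        calc D = |(x - t) + (t - x_I)| := by rw [hDdef]; ring_nf
          _ ≤ |x - t| + |t - x_I| := abs_add_le _ _
      linarith
    · have htri2 : |x - t| ≤ D + |t - x_I| := by
        calc |x - t| = |(x - x_I) + (x_I - t)| := by ring_nf
          _ ≤ |x - x_I| + |x_I - t| := abs_add_le _ _
          _ = D + |t - x_I| := by rw [hDdef, abs_sub_comm x_I t]
      linarith
  have hu : ∀ t ∈ Set.Icc lo hi,
      (x - t) / 2 ≠ 0 ∧ |(x - t) / 2| ≤ 5 * π / 8 ∧ D / 4 ≤ |(x - t) / 2| := by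
    intro t ht
    obtain ⟨h1, h2⟩ := hdist t ht
    have habs : |(x - t) / 2| = |x - t| / 2 := by
      rw [abs_div]; norm_num
    refine ⟨?_, ?_, ?_⟩
    · intro h0
      rw [div_eq_zero_iff] at h0
      rcases h0 with h0 | h0
      · rw [sub_eq_zero] at h0
        subst h0
        simp at h1
        linarith
      · norm_num at h0
    · rw [habs]; linarith
    · rw [habs]; linarith
  have hsin : ∀ t ∈ Set.Icc lo hi, Real.sin ((x - t) / 2) ≠ 0 := by
    intro t ht
    obtain ⟨h1, h2, _⟩ := hu t ht
    exact sin_ne_zero_of_small h1 h2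
  set U := {t : ℝ | Real.sin ((x - t) / 2) ≠ 0} with hUdef
  have hUopen : IsOpen U := by
    apply isOpen_ne.preimage (f := fun t : ℝ => Real.sin ((x - t) / 2))
    fun_prop
  have hIccU : Set.Icc lo hi ⊆ U := hsin
  have hsmooth : ContDiffOn ℝ (m + 1 : ℕ) (cotF x) U := cotF_contDiffOn x (m + 1)
  -- the uniform derivative bound
  set Cd : ℝ := S * (4 * π) ^ (m + 2) / D ^ (m + 2) with hCd
  have hCd0 : 0 < Cd := by positivity
  have hC : ∀ y ∈ Set.Icc lo hi,
      ‖iteratedDerivWithin (m + 1) (cotF x) (Set.Icc lo hi) y‖ ≤ Cd := by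
    intro y hy
    rw [Real.norm_eq_abs,
      iteratedDerivWithin_eq_of_contDiffOn hUopen hIccU (uniqueDiffOn_Icc hlohi)
        hsmooth le_rfl hy,
      cotF_iteratedDeriv x (m + 1) y (hsin y hy)]
    obtain ⟨hu1, hu2, hu3⟩ := hu y hy
    have hB1 : (1 : ℝ) ≤ 4 * π / D := by
      rw [le_div_iff₀ hD0]
      linarith
    have hcot : |cotF x y| ≤ 4 * π / D := by
      have h1 : |cotF x y| ≤ π / |(x - y) / 2| := abs_cot_le hu1 hu2
      have h2 : π / |(x - y) / 2| ≤ π / (D / 4) := by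
        apply div_le_div_of_nonneg_left (by linarith) (by linarith) hu3
      have h3 : π / (D / 4) = 4 * π / D := by
        field_simp
      linarith
    calc |p.eval (cotF x y)|
        ≤ (∑ i ∈ Finset.range (m + 2 + 1), |p.coeff i|) * (4 * π / D) ^ (m + 2) :=
          poly_eval_bound p (m + 2) (cotPoly_natDegree (m + 1)) hB1 hcot
      _ ≤ S * (4 * π / D) ^ (m + 2) := by
          apply mul_le_mul_of_nonneg_right _ (by positivity)
          exact hSsum
      _ = Cd := by
          rw [hCd, div_pow]
          ring
  -- Taylor remainder bound
  have hsmoothIcc : ContDiffOn ℝ ((m : ℕ∞) + 1) (cotF x) (Set.Icc lo hi) := by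
    have := hsmooth.mono hIccU
    exact_mod_cast this
  have htay : ∀ t ∈ Set.Icc lo hi,
      |cotF x t - taylorWithinEval (cotF x) m (Set.Icc lo hi) lo t| ≤
        Cd * (2 * r) ^ (m + 1) / m.factorial := by
    intro t ht
    have h1 := taylor_mean_remainder_bound (n := m) hab hsmoothIcc ht hC
    rw [Real.norm_eq_abs] at h1
    refine le_trans h1 ?_
    have ht0 : 0 ≤ t - lo := by linarith [ht.1]
    have ht2 : t - lo ≤ 2 * r := by
      have := ht.2; rw [hhi] at this; rw [hlo]; linarith
    gcongr
  -- define the explicit Taylor polynomial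
  set c : ℕ → ℝ := fun k => iteratedDerivWithin k (cotF x) (Set.Icc lo hi) lo with hc
  set Pf : ℝ → ℝ := fun t => ∑ k ∈ Finset.range (m + 1),
    ((k.factorial : ℝ)⁻¹ * (t - lo) ^ k) * c k with hPfdef
  have hPf : ∀ t, taylorWithinEval (cotF x) m (Set.Icc lo hi) lo t = Pf t := by
    intro t
    rw [taylor_within_apply, hPfdef]
    simp [smul_eq_mul, hc]
  have hPfcont : Continuous Pf := by
    apply continuous_finset_sum
    intro k _
    exact (continuous_const.mul ((continuous_id.sub continuous_const).pow k)).mul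
      continuous_const
  -- vanishing moments
  have hmomj : ∀ j : ℕ, j ≤ m → ∫ t in lo..hi, a t * t ^ j = 0 := by
    intro j hj
    apply ha_mom
    have h1 : (j : ℝ) ≤ (m : ℝ) := by exact_mod_cast hj
    have h2 := Int.floor_le (1 / q)
    rw [hm] at h1
    linarith
  have hmomP : ∫ t in lo..hi, a t * Pf t = 0 :=
    integral_mul_polysum_eq_zero ha_meas ha_bd m c hmomj
  -- integrability
  have hcotcont : ContinuousOn (cotF x) (Set.uIcc lo hi) := by
    rw [Set.uIcc_of_le hab]
    exact (hsmooth.mono hIccU).continuousOn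
  have hInt1 : IntervalIntegrable (fun t => a t * (cotF x t - Pf t)) volume lo hi :=
    integrable_mul_of_bounded ha_meas ha_bd (hcotcont.sub hPfcont.continuousOn)
  have hInt2 : IntervalIntegrable (fun t => a t * Pf t) volume lo hi :=
    integrable_mul_of_bounded ha_meas ha_bd hPfcont.continuousOn
  -- rewrite the integral
  have heq : ∀ t : ℝ, a t / Real.tan ((x - t) / 2) = a t * cotF x t := by
    intro t
    rw [div_eq_mul_inv, Real.tan_eq_sin_div_cos, inv_div]
    rfl
  have hsplit : ∫ t in lo..hi, a t / Real.tan ((x - t) / 2) =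
      ∫ t in lo..hi, a t * (cotF x t - Pf t) := by
    calc ∫ t in lo..hi, a t / Real.tan ((x - t) / 2)
        = ∫ t in lo..hi, a t * cotF x t := by simp_rw [heq]
      _ = ∫ t in lo..hi, (a t * (cotF x t - Pf t) + a t * Pf t) := by
          apply intervalIntegral.integral_congr
          intro t _
          ring
      _ = (∫ t in lo..hi, a t * (cotF x t - Pf t)) + ∫ t in lo..hi, a t * Pf t :=
          intervalIntegral.integral_add hInt1 hInt2
      _ = ∫ t in lo..hi, a t * (cotF x t - Pf t) := by rw [hmomP, add_zero]
  rw [hsplit]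
  -- the final estimate
  set Cb : ℝ := (2 * r) ^ (-(1 / q)) * (Cd * (2 * r) ^ (m + 1) / m.factorial) with hCb
  have hbnd : |∫ t in lo..hi, a t * (cotF x t - Pf t)| ≤ Cb * |hi - lo| := by
    rw [← Real.norm_eq_abs]
    apply intervalIntegral.norm_integral_le_of_norm_le_const
    intro t ht
    have ht' : t ∈ Set.Icc lo hi := by
      rw [Set.uIoc_of_le hab] at ht
      exact Set.Ioc_subset_Icc_self ht
    rw [Real.norm_eq_abs, abs_mul, hCb]
    apply mul_le_mul (ha_bd t) _ (abs_nonneg _) (Real.rpow_nonneg (by linarith) _)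
    rw [← hPf t]
    exact htay t ht'
  have hhilo : |hi - lo| = 2 * r := by
    rw [hhi, hlo, abs_of_pos (by linarith)]
    ring
  rw [hhilo] at hbnd
  refine le_trans hbnd (le_of_eq ?_)
  have h2r : (0 : ℝ) < 2 * r := by linarith
  have key : (2 * r) ^ (-(1 / q)) * (2 * r) ^ ((m + 2 : ℕ) : ℝ) =
      (2 * r) ^ ((m : ℝ) + 2 - 1 / q) := by
    rw [← Real.rpow_add h2r]
    congr 1
    push_cast
    ring
  rw [hCb, hCd]
  rw [← key, Real.rpow_natCast]
  have hfac : (m.factorial : ℝ) ≠ 0 := by positivity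
  field_simp
  ring
end

section
/- Let b and f be trigonometric polynomials with f(z) = Σ_{n≥0} a_n z^n, and set F(x) = f(e^{−ix}). Then the analytic (Cauchy) projection of the periodic bilinear Hilbert transform H(b,F)(x) = p.v. ∫_T b(x+t) F(2t) / tan((x−t)/2) dt equals, up to a multiplicative constant, Σ_{m,n ∈ N} a_n b_{m+n} sign(m−n) e^{2imx}, where b_k are the Fourier coefficients of b. -/
open MeasureTheory Real Filter
open intervalIntegral

/-- The analytic trigonometric polynomial symbol `b(x) = Σ_{k ≤ M} β_k e^{ikx}`. -/
noncomputable def symbolPoly (M : ℕ) (β : ℕ → ℂ) (x : ℝ) : ℂ :=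
  ∑ k ∈ Finset.range (M + 1), β k * Complex.exp (k * Complex.I * x)

/-- `F(x) = f(e^{-ix}) = Σ_{n ≤ N} a_n e^{-inx}` for `f(z) = Σ a_n z^n`. -/
noncomputable def checkPoly (N : ℕ) (a : ℕ → ℂ) (x : ℝ) : ℂ :=
  ∑ n ∈ Finset.range (N + 1), a n * Complex.exp (-(n * Complex.I * x))

noncomputable def Pker (m : ℕ) (s : ℝ) : ℝ :=
  1 + Real.cos (m * s) + 2 * ∑ j ∈ Finset.Ico 1 m, Real.cos (j * s)

lemma sin_step (a s : ℝ) :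
    Real.sin (a + s) * Real.cos (s / 2)
      = Real.sin a * Real.cos (s / 2) + Real.sin (s / 2) * (Real.cos (a + s) + Real.cos a) := by
  have e1 : (a + s - a) / 2 = s / 2 := by ring
  have e2 : (a + s + a) / 2 = a + s / 2 := by ring
  have h1 := Real.sin_sub_sin (a + s) a
  have h2 := Real.cos_add_cos (a + s) a
  rw [e1, e2] at h1 h2
  linear_combination Real.cos (s / 2) * h1 - Real.sin (s / 2) * h2

lemma sin_mul_cos_half (m : ℕ) (s : ℝ) (hm : 1 ≤ m) :
    Real.sin (m * s) * Real.cos (s / 2) = Real.sin (s / 2) * Pker m s := by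
  induction m with
  | zero => omega
  | succ m ih =>
    rcases Nat.eq_or_lt_of_le hm with h | h
    · have : m = 0 := by omega
      subst this
      simp only [Pker, Nat.cast_one, one_mul, Finset.Ico_self, Finset.sum_empty, mul_zero,
        add_zero]
      have h1 := Real.sin_two_mul (s / 2)
      have h2 := Real.cos_two_mul (s / 2)
      rw [show 2 * (s / 2) = s by ring] at h1 h2
      push_cast
      rw [one_mul]
      linear_combination Real.cos (s / 2) * h1 - Real.sin (s / 2) * h2
    · have hm' : 1 ≤ m := by omega
      have key : Real.sin ((m + 1 : ℕ) * s) * Real.cos (s / 2)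
          = Real.sin ((m : ℝ) * s) * Real.cos (s / 2)
            + Real.sin (s / 2) * (Real.cos ((m + 1 : ℕ) * s) + Real.cos ((m : ℝ) * s)) := by
        have := sin_step ((m : ℝ) * s) s
        push_cast
        rw [show ((m : ℝ) + 1) * s = (m : ℝ) * s + s by ring]
        exact this
      rw [key, ih hm']
      simp only [Pker]
      rw [Finset.sum_Ico_succ_top hm']
      push_cast
      ring

lemma Pker_continuous (m : ℕ) : Continuous (Pker m) := by
  unfold Pker
  fun_prop

lemma integral_cos_nat (j : ℕ) (hj : 1 ≤ j) : ∫ s in (0:ℝ)..π, Real.cos (j * s) = 0 := by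
  have hj' : (j : ℝ) ≠ 0 := by positivity
  have h := mul_integral_comp_mul_left (a := (0:ℝ)) (b := π) (c := (j:ℝ)) (f := Real.cos)
  rw [mul_zero, integral_cos, Real.sin_nat_mul_pi, Real.sin_zero, sub_zero] at h
  exact (mul_eq_zero.1 h).resolve_left hj'

lemma integral_Pker (m : ℕ) (hm : 1 ≤ m) : ∫ s in (0:ℝ)..π, Pker m s = π := by
  unfold Pker
  rw [intervalIntegral.integral_add, intervalIntegral.integral_add, integral_one, integral_cos_nat m hm]
  · rw [intervalIntegral.integral_const_mul, intervalIntegral.integral_finset_sum]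
    · rw [Finset.sum_congr rfl (fun j hj => integral_cos_nat j (Finset.mem_Ico.1 hj).1)]
      simp
    · exact fun j _ => (Real.continuous_cos.comp (by fun_prop)).intervalIntegrable _ _
  · exact intervalIntegrable_const
  · exact (Real.continuous_cos.comp (by fun_prop)).intervalIntegrable _ _
  · exact (intervalIntegrable_const.add
      ((Real.continuous_cos.comp (by fun_prop)).intervalIntegrable _ _))
  · exact ((continuous_const.mul (by fun_prop : Continuous fun s : ℝ =>
      ∑ j ∈ Finset.Ico 1 m, Real.cos (j * s))).intervalIntegrable _ _)

lemma sin_div_tan_eq (m : ℕ) (hm : 1 ≤ m) (s : ℝ) (hs : s ∈ Set.Ioo 0 π) :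
    Real.sin (m * s) / Real.tan (s / 2) = Pker m s := by
  have hsin : 0 < Real.sin (s / 2) :=
    Real.sin_pos_of_pos_of_lt_pi (by linarith [hs.1]) (by linarith [hs.2, Real.pi_pos])
  have hcos : 0 < Real.cos (s / 2) :=
    Real.cos_pos_of_mem_Ioo ⟨by linarith [hs.1, Real.pi_pos], by linarith [hs.2]⟩
  rw [Real.tan_eq_sin_div_cos]
  rw [div_div_eq_mul_div]
  rw [div_eq_iff hsin.ne']
  linear_combination sin_mul_cos_half m s hm

lemma sinIntegral_tendsto (m : ℕ) (hm : 1 ≤ m) :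
    Tendsto (fun ε : ℝ => ∫ s in ε..π, Real.sin (m * s) / Real.tan (s / 2))
      (nhdsWithin 0 (Set.Ioi 0)) (nhds π) := by
  have hPint : ∀ a b : ℝ, IntervalIntegrable (Pker m) volume a b :=
    fun a b => (Pker_continuous m).intervalIntegrable a b
  have hsplit : ∀ ε : ℝ, ∫ s in ε..π, Pker m s
      = π - ∫ s in (0:ℝ)..ε, Pker m s := by
    intro ε
    rw [eq_sub_iff_add_eq, add_comm, intervalIntegral.integral_add_adjacent_intervals
      (hPint 0 ε) (hPint ε π), integral_Pker m hm]
  have hcont : Continuous fun ε : ℝ => ∫ s in (0:ℝ)..ε, Pker m s :=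
    intervalIntegral.continuous_primitive (fun a b => hPint a b) 0
  have h1 : Tendsto (fun ε : ℝ => ∫ s in ε..π, Pker m s) (nhdsWithin 0 (Set.Ioi 0))
      (nhds π) := by
    have : Tendsto (fun ε : ℝ => π - ∫ s in (0:ℝ)..ε, Pker m s)
        (nhds 0) (nhds (π - ∫ s in (0:ℝ)..(0:ℝ), Pker m s)) :=
      (tendsto_const_nhds.sub (hcont.tendsto 0))
    rw [intervalIntegral.integral_same, sub_zero] at this
    exact Tendsto.congr (fun ε => (hsplit ε).symm) (this.mono_left nhdsWithin_le_nhds)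
  refine h1.congr' ?_
  filter_upwards [Ioo_mem_nhdsGT_of_mem (Set.mem_Ico.2 ⟨le_refl 0, Real.pi_pos⟩)] with ε hε
  refine (intervalIntegral.integral_congr_ae ?_).symm
  have hne : ∀ᵐ x : ℝ, x ≠ π := by
    rw [MeasureTheory.ae_iff]
    simpa using Real.volume_singleton
  filter_upwards [hne] with x hx hxmem
  rw [Set.uIoc_of_le hε.2.le] at hxmem
  exact sin_div_tan_eq m hm x ⟨lt_trans hε.1 hxmem.1, lt_of_le_of_ne hxmem.2 hx⟩

lemma sinIntegral_tendsto_int (m : ℤ) :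
    Tendsto (fun ε : ℝ => ∫ s in ε..π, Real.sin (m * s) / Real.tan (s / 2))
      (nhdsWithin 0 (Set.Ioi 0)) (nhds (Real.sign m * π)) := by
  rcases lt_trichotomy m 0 with hm | hm | hm
  · have hsgn : Real.sign (m : ℝ) = -1 := Real.sign_of_neg (by exact_mod_cast hm)
    rw [hsgn]
    have hnat : 1 ≤ m.natAbs := by omega
    have h := (sinIntegral_tendsto m.natAbs hnat).neg
    rw [← neg_one_mul] at h
    refine h.congr (fun ε => ?_)
    rw [← intervalIntegral.integral_neg]
    refine intervalIntegral.integral_congr (fun s _ => ?_)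
    have : ((m.natAbs : ℝ)) = -(m : ℝ) := by
      rw [Nat.cast_natAbs]
      exact_mod_cast abs_of_neg hm
    rw [this]
    rw [neg_mul, Real.sin_neg]
    ring
  · subst hm
    simp only [Int.cast_zero, Real.sign_zero, zero_mul, Real.sin_zero, zero_div]
    simpa using (tendsto_const_nhds : Tendsto (fun _ : ℝ => (0:ℝ)) _ (nhds 0))
  · have hsgn : Real.sign (m : ℝ) = 1 := Real.sign_of_pos (by exact_mod_cast hm)
    rw [hsgn, one_mul]
    have hnat : 1 ≤ m.natAbs := by omega
    have h := sinIntegral_tendsto m.natAbs hnat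
    refine h.congr (fun ε => ?_)
    refine intervalIntegral.integral_congr (fun s _ => ?_)
    have : ((m.natAbs : ℝ)) = (m : ℝ) := by
      rw [Nat.cast_natAbs]
      exact_mod_cast abs_of_pos hm
    rw [this]

noncomputable def fker (m : ℤ) (x : ℝ) (t : ℝ) : ℂ :=
  Complex.exp (m * Complex.I * t) / (Real.tan ((x - t) / 2) : ℂ)

lemma abs_tan_eq {y : ℝ} (hy : |y| ≤ π / 2) : |Real.tan y| = Real.tan |y| := by
  rcases abs_cases y with ⟨he, _⟩ | ⟨he, _⟩
  · rw [he]
    exact abs_of_nonneg (Real.tan_nonneg_of_nonneg_of_le_pi_div_two (he ▸ abs_nonneg y) (he ▸ hy))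
  · rw [he, Real.tan_neg]
    exact abs_of_nonpos (by
      have h0 : 0 ≤ Real.tan (-y) := Real.tan_nonneg_of_nonneg_of_le_pi_div_two
        (by rw [← he]; exact abs_nonneg y) (by rw [← he]; exact hy)
      rw [Real.tan_neg] at h0
      linarith)

lemma fker_norm_le (m : ℤ) (x : ℝ) {ε : ℝ} (hε : 0 < ε) (hεπ : ε < π) {t : ℝ}
    (h1 : ε ≤ |x - t|) (h2 : |x - t| ≤ π) :
    ‖fker m x t‖ ≤ (Real.tan (ε / 2))⁻¹ := by
  have htanε : 0 < Real.tan (ε / 2) :=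
    Real.tan_pos_of_pos_of_lt_pi_div_two (by linarith) (by linarith)
  have hexp : ‖Complex.exp (m * Complex.I * t)‖ = 1 := by
    rw [Complex.norm_exp]
    have : ((m : ℂ) * Complex.I * t).re = 0 := by simp
    rw [this, Real.exp_zero]
  set y := (x - t) / 2 with hy
  have hay : |y| = |x - t| / 2 := by rw [hy, abs_div]; simp
  have hy2 : |y| ≤ π / 2 := by rw [hay]; linarith
  have hy1 : ε / 2 ≤ |y| := by rw [hay]; linarith
  have hfn : ‖fker m x t‖ = 1 / |Real.tan y| := by
    rw [fker, norm_div, hexp, Complex.norm_real, Real.norm_eq_abs]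
  rcases eq_or_lt_of_le hy2 with heq | hlt
  · -- |y| = π/2, tan |y| = 0, so tan y = 0 and fker = 0
    have : |Real.tan y| = 0 := by rw [abs_tan_eq hy2, heq, Real.tan_pi_div_two]
    rw [hfn, this]
    rw [div_zero]; exact le_of_lt (inv_pos.2 htanε)
  · have hmono : Real.tan (ε / 2) ≤ Real.tan |y| := by
      rcases eq_or_lt_of_le hy1 with he | hl
      · rw [he]
      · exact le_of_lt (Real.tan_lt_tan_of_nonneg_of_lt_pi_div_two (by linarith) hlt hl)
    have hty : 0 < Real.tan |y| := lt_of_lt_of_le htanε hmono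
    rw [hfn, abs_tan_eq hy2, one_div]
    exact inv_anti₀ htanε hmono

lemma fker_measurable (m : ℤ) (x : ℝ) : Measurable (fker m x) := by
  unfold fker
  apply Measurable.div
  · exact Complex.measurable_exp.comp (by fun_prop)
  · apply Complex.measurable_ofReal.comp
    have htan : Measurable Real.tan := by
      have : Real.tan = fun y => Real.sin y / Real.cos y := funext fun y => Real.tan_eq_sin_div_cos y
      rw [this]
      exact Real.measurable_sin.div Real.measurable_cos
    exact htan.comp (by fun_prop)

lemma fker_integrableOn (m : ℤ) (x : ℝ) {ε : ℝ} (hε : 0 < ε) (hεπ : ε < π)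
    {s : Set ℝ} (hs : MeasurableSet s) (hfin : volume s ≠ ⊤)
    (hsub : ∀ t ∈ s, ε ≤ |x - t| ∧ |x - t| ≤ π) :
    IntegrableOn (fker m x) s volume := by
  apply Measure.integrableOn_of_bounded hfin ((fker_measurable m x).aestronglyMeasurable)
  rw [ae_restrict_iff' hs]
  exact ae_of_all _ fun t ht => fker_norm_le m x hε hεπ (hsub t ht).1 (hsub t ht).2

lemma set_split (x ε : ℝ) (hε : 0 < ε) (hεπ : ε < π) :
    Set.Ioo (x - π) (x + π) \ Set.Ioo (x - ε) (x + ε)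
      = Set.Ioc (x - π) (x - ε) ∪ Set.Ico (x + ε) (x + π) := by
  ext t
  simp only [Set.mem_diff, Set.mem_Ioo, Set.mem_union, Set.mem_Ioc, Set.mem_Ico, not_and, not_lt]
  constructor
  · rintro ⟨⟨h1, h2⟩, h3⟩
    by_cases hc : t ≤ x - ε
    · exact Or.inl ⟨h1, hc⟩
    · exact Or.inr ⟨h3 (by linarith), h2⟩
  · rintro (⟨h1, h2⟩ | ⟨h1, h2⟩)
    · exact ⟨⟨h1, by linarith⟩, fun h => by linarith⟩
    · exact ⟨⟨by linarith, h2⟩, fun h => by linarith⟩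

lemma fker_setIntegral_split (m : ℤ) (x : ℝ) {ε : ℝ} (hε : 0 < ε) (hεπ : ε < π) :
    ∫ t in Set.Ioo (x - π) (x + π) \ Set.Ioo (x - ε) (x + ε), fker m x t
      = (∫ t in (x - π)..(x - ε), fker m x t) + ∫ t in (x + ε)..(x + π), fker m x t := by
  have hI1 : IntegrableOn (fker m x) (Set.Ioc (x - π) (x - ε)) volume := by
    refine fker_integrableOn m x hε hεπ measurableSet_Ioc measure_Ioc_lt_top.ne fun t ht => ?_
    rw [Set.mem_Ioc] at ht
    constructor
    · rw [abs_of_nonneg (by linarith)]; linarith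
    · rw [abs_of_nonneg (by linarith)]; linarith
  have hI2 : IntegrableOn (fker m x) (Set.Ico (x + ε) (x + π)) volume := by
    refine fker_integrableOn m x hε hεπ measurableSet_Ico measure_Ico_lt_top.ne fun t ht => ?_
    rw [Set.mem_Ico] at ht
    constructor
    · rw [abs_of_nonpos (by linarith)]; linarith
    · rw [abs_of_nonpos (by linarith)]; linarith
  rw [set_split x ε hε hεπ,
    setIntegral_union (by
      rw [Set.disjoint_left]
      rintro t ⟨_, ht2⟩ ⟨ht3, _⟩
      linarith) measurableSet_Ico hI1 hI2,
    intervalIntegral.integral_of_le (by linarith : x - π ≤ x - ε),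
    intervalIntegral.integral_of_le (by linarith : x + ε ≤ x + π)]
  congr 1
  rw [MeasureTheory.integral_Ico_eq_integral_Ioo, MeasureTheory.integral_Ioc_eq_integral_Ioo]

lemma fker_pair (m : ℤ) (x s : ℝ) :
    fker m x (x - s) + fker m x (s + x)
      = Complex.exp (m * Complex.I * x) * (-2 * Complex.I) *
        ((Real.sin (m * s) / Real.tan (s / 2) : ℝ) : ℂ) := by
  unfold fker
  rw [show (x - (x - s)) / 2 = s / 2 by ring, show (x - (s + x)) / 2 = -(s / 2) by ring,
    Real.tan_neg, Complex.ofReal_neg, div_neg]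
  have h1 : (m : ℂ) * Complex.I * ((x - s : ℝ) : ℂ)
      = (m : ℂ) * Complex.I * (x : ℝ) + (-((m : ℂ) * s)) * Complex.I := by push_cast; ring
  have h2 : (m : ℂ) * Complex.I * ((s + x : ℝ) : ℂ)
      = (m : ℂ) * Complex.I * (x : ℝ) + ((m : ℂ) * s) * Complex.I := by push_cast; ring
  rw [h1, h2, Complex.exp_add, Complex.exp_add, Complex.exp_mul_I, Complex.exp_mul_I,
    Complex.cos_neg, Complex.sin_neg]
  have h3 : ((Real.sin ((m : ℝ) * s) : ℝ) : ℂ) = Complex.sin ((m : ℂ) * s) := by push_cast; ring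
  rw [Complex.ofReal_div, h3]
  ring

lemma fker_comp_integrable (m : ℤ) (x : ℝ) {ε : ℝ} (hε : 0 < ε) (hεπ : ε < π)
    (g : ℝ → ℝ) (hg : Measurable g) (hgabs : ∀ s ∈ Set.Ioc ε π, |x - g s| = s) :
    IntervalIntegrable (fun s => fker m x (g s)) volume ε π := by
  rw [intervalIntegrable_iff_integrableOn_Ioc_of_le (by linarith)]
  apply Measure.integrableOn_of_bounded (M := (Real.tan (ε / 2))⁻¹) measure_Ioc_lt_top.ne
    ((fker_measurable m x).comp hg).aestronglyMeasurable
  rw [ae_restrict_iff' measurableSet_Ioc]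
  refine ae_of_all _ fun s hs => ?_
  exact fker_norm_le m x hε hεπ (by rw [hgabs s hs]; exact hs.1.le)
    (by rw [hgabs s hs]; exact hs.2)

lemma fker_main_eq (m : ℤ) (x : ℝ) {ε : ℝ} (hε : 0 < ε) (hεπ : ε < π) :
    ∫ t in Set.Ioo (x - π) (x + π) \ Set.Ioo (x - ε) (x + ε), fker m x t
      = Complex.exp (m * Complex.I * x) * (-2 * Complex.I) *
        ((∫ s in ε..π, Real.sin (m * s) / Real.tan (s / 2) : ℝ) : ℂ) := by
  have hg1 : IntervalIntegrable (fun s => fker m x (x - s)) volume ε π :=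
    fker_comp_integrable m x hε hεπ (fun s => x - s) (by fun_prop)
      (fun s hs => by rw [show x - (x - s) = s by ring]; exact abs_of_pos (lt_trans hε hs.1))
  have hg2 : IntervalIntegrable (fun s => fker m x (s + x)) volume ε π :=
    fker_comp_integrable m x hε hεπ (fun s => s + x) (by fun_prop)
      (fun s hs => by
        rw [show x - (s + x) = -s by ring, abs_neg]
        exact abs_of_pos (lt_trans hε hs.1))
  rw [fker_setIntegral_split m x hε hεπ]
  have e1 : (∫ t in (x - π)..(x - ε), fker m x t) = ∫ s in ε..π, fker m x (x - s) := by
    rw [intervalIntegral.integral_comp_sub_left (fker m x) x]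
  have e2 : (∫ t in (x + ε)..(x + π), fker m x t) = ∫ s in ε..π, fker m x (s + x) := by
    rw [intervalIntegral.integral_comp_add_right (fker m x) x, add_comm ε x, add_comm π x]
  rw [e1, e2, ← intervalIntegral.integral_add hg1 hg2]
  rw [show (fun s => fker m x (x - s) + fker m x (s + x))
      = fun s => Complex.exp (m * Complex.I * x) * (-2 * Complex.I) *
          ((Real.sin (m * s) / Real.tan (s / 2) : ℝ) : ℂ) from funext fun s => fker_pair m x s]
  rw [intervalIntegral.integral_const_mul, intervalIntegral.integral_ofReal]

noncomputable def Wc (m : ℤ) : ℂ := (-2 * Complex.I) * ((Real.sign m * π : ℝ) : ℂ)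

lemma expIntegral_tendsto (m : ℤ) (x : ℝ) :
    Tendsto (fun ε : ℝ => ∫ t in Set.Ioo (x - π) (x + π) \ Set.Ioo (x - ε) (x + ε), fker m x t)
      (nhdsWithin 0 (Set.Ioi 0))
      (nhds (Complex.exp (m * Complex.I * x) * Wc m)) := by
  rw [show Complex.exp (m * Complex.I * x) * Wc m
      = Complex.exp (m * Complex.I * x) * (-2 * Complex.I) * ((Real.sign m * π : ℝ) : ℂ) by
    rw [Wc]; ring]
  have h1 := sinIntegral_tendsto_int m
  have h2 : Tendsto (fun ε : ℝ => Complex.exp (m * Complex.I * x) * (-2 * Complex.I) *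
      ((∫ s in ε..π, Real.sin (m * s) / Real.tan (s / 2) : ℝ) : ℂ))
      (nhdsWithin 0 (Set.Ioi 0))
      (nhds (Complex.exp (m * Complex.I * x) * (-2 * Complex.I) * ((Real.sign m * π : ℝ) : ℂ))) :=
    (Complex.continuous_ofReal.tendsto _).comp h1 |>.const_mul _
  refine h2.congr' ?_
  filter_upwards [Ioo_mem_nhdsGT_of_mem (Set.mem_Ico.2 ⟨le_refl 0, Real.pi_pos⟩)] with ε hεm
  exact (fker_main_eq m x hεm.1 hεm.2).symm

lemma intExp (p : ℤ) : ∫ x in (0:ℝ)..(2*π), Complex.exp ((p:ℂ) * Complex.I * x)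
    = if p = 0 then ((2*π:ℝ):ℂ) else 0 := by
  rcases eq_or_ne p 0 with hp | hp
  · subst hp
    simp
  · rw [if_neg hp]
    have hc : (p : ℂ) * Complex.I ≠ 0 := by
      simp [Complex.I_ne_zero, Complex.ext_iff]
      exact_mod_cast hp
    have key : ∀ y : ℝ, Complex.exp ((p:ℂ) * Complex.I * y)
        = Complex.exp (((p:ℂ) * Complex.I) * y) := fun y => rfl
    rw [integral_exp_mul_complex hc]
    have h1 : (p:ℂ) * Complex.I * ((2*π:ℝ):ℂ) = (p:ℤ) * (2 * π * Complex.I) := by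
      push_cast; ring
    rw [h1, Complex.exp_int_mul_two_pi_mul_I]
    norm_num

lemma integrand_rewrite (M N : ℕ) (β a : ℕ → ℂ) (x t : ℝ) :
    symbolPoly M β (x + t) * checkPoly N a (2 * t) / (Real.tan ((x - t) / 2) : ℂ)
      = ∑ k ∈ Finset.range (M + 1), ∑ n ∈ Finset.range (N + 1),
          β k * a n * Complex.exp (k * Complex.I * x) * fker ((k : ℤ) - 2 * n) x t := by
  unfold symbolPoly checkPoly fker
  rw [Finset.sum_mul_sum, Finset.sum_div]
  refine Finset.sum_congr rfl fun k _ => ?_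
  rw [Finset.sum_div]
  refine Finset.sum_congr rfl fun n _ => ?_
  have hexp : Complex.exp ((k:ℂ) * Complex.I * ((x + t : ℝ) : ℂ))
        * Complex.exp (-((n:ℂ) * Complex.I * ((2 * t : ℝ) : ℂ)))
      = Complex.exp ((k:ℂ) * Complex.I * (x : ℝ))
        * Complex.exp ((((k : ℤ) - 2 * n : ℤ) : ℂ) * Complex.I * (t : ℝ)) := by
    rw [← Complex.exp_add, ← Complex.exp_add]
    congr 1
    push_cast
    ring
  calc β k * Complex.exp ((k:ℂ) * Complex.I * ((x + t : ℝ) : ℂ))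
        * (a n * Complex.exp (-((n:ℂ) * Complex.I * ((2 * t : ℝ) : ℂ))))
        / (Real.tan ((x - t) / 2) : ℂ)
      = β k * a n * (Complex.exp ((k:ℂ) * Complex.I * ((x + t : ℝ) : ℂ))
          * Complex.exp (-((n:ℂ) * Complex.I * ((2 * t : ℝ) : ℂ))))
          / (Real.tan ((x - t) / 2) : ℂ) := by ring
    _ = _ := by rw [hexp]; ring

lemma fker_integrableOn_S (m : ℤ) (x : ℝ) {ε : ℝ} (hε : 0 < ε) (hεπ : ε < π) :
    IntegrableOn (fker m x) (Set.Ioo (x - π) (x + π) \ Set.Ioo (x - ε) (x + ε)) volume := by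
  refine fker_integrableOn m x hε hεπ (measurableSet_Ioo.diff measurableSet_Ioo)
    (ne_top_of_le_ne_top measure_Ioo_lt_top.ne
      (measure_mono Set.diff_subset)) fun t ht => ?_
  obtain ⟨⟨h1, h2⟩, h3⟩ := ht
  rw [Set.mem_Ioo, not_and_or, not_lt, not_lt] at h3
  constructor
  · rcases h3 with h | h
    · rw [abs_of_nonneg (by linarith)]; linarith
    · rw [abs_of_nonpos (by linarith)]; linarith
  · rw [abs_le]; constructor <;> linarith

/-- **Fourier identity for the bilinear Hilbert transform.** There is a nonzero constant `c`
such that for all trigonometric polynomials `b(x) = Σ β_k e^{ikx}` and `F(x) = f(e^{-ix})`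
with `f(z) = Σ a_n z^n`, if `G` is the principal value
`G(x) = p.v. ∫_𝕋 b(x+t) F(2t) / tan((x-t)/2) dt`, then the nonnegative Fourier coefficients of
`G` (i.e. its analytic projection) are `c · Σ_n a_n β_{m+n} sign(m-n)` at frequency `2m`, and
vanish at odd nonnegative frequencies. -/
theorem analytic_projection_bilinear_hilbert : ∃ c : ℂ, c ≠ 0 ∧
    ∀ (M N : ℕ) (β a : ℕ → ℂ) (G : ℝ → ℂ),
      (∀ x : ℝ, Tendsto (fun ε : ℝ =>
          ∫ t in Set.Ioo (x - π) (x + π) \ Set.Ioo (x - ε) (x + ε),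
            symbolPoly M β (x + t) * checkPoly N a (2 * t) /
              (Real.tan ((x - t) / 2) : ℂ))
        (nhdsWithin 0 (Set.Ioi 0)) (nhds (G x))) →
      ∀ k : ℕ,
        ((1 / (2 * π) : ℝ) : ℂ) *
            ∫ x in (0:ℝ)..(2 * π), G x * Complex.exp (-(k * Complex.I * x)) =
          c * (if k % 2 = 0 then
              ∑ n ∈ Finset.range (N + 1),
                (if k / 2 + n ≤ M then
                  a n * β (k / 2 + n) * (Real.sign (((k / 2 : ℕ) : ℝ) - n) : ℂ)
                else 0)
            else 0) := by
  refine ⟨-(2 * π * Complex.I), ?_, ?_⟩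
  · simp only [ne_eq, neg_eq_zero, mul_eq_zero, Complex.I_ne_zero, or_false, not_or]
    norm_num [Real.pi_ne_zero]
  intro M N β a G hG K
  -- the explicit limit function
  set H : ℝ → ℂ := fun x => ∑ k ∈ Finset.range (M + 1), ∑ n ∈ Finset.range (N + 1),
    β k * a n * Complex.exp (k * Complex.I * x)
      * (Complex.exp (((k : ℤ) - 2 * n : ℤ) * Complex.I * x) * Wc ((k : ℤ) - 2 * n)) with hH
  -- step 1 : G = H
  have hGH : ∀ x, G x = H x := by
    intro x
    refine tendsto_nhds_unique (hG x) ?_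
    have hlim : Tendsto (fun ε : ℝ => ∑ k ∈ Finset.range (M + 1), ∑ n ∈ Finset.range (N + 1),
        β k * a n * Complex.exp (k * Complex.I * x)
          * ∫ t in Set.Ioo (x - π) (x + π) \ Set.Ioo (x - ε) (x + ε),
              fker ((k : ℤ) - 2 * n) x t)
        (nhdsWithin 0 (Set.Ioi 0)) (nhds (H x)) := by
      rw [hH]
      refine tendsto_finset_sum _ fun k _ => tendsto_finset_sum _ fun n _ => ?_
      exact (expIntegral_tendsto ((k : ℤ) - 2 * n) x).const_mul _
    refine hlim.congr' ?_
    filter_upwards [Ioo_mem_nhdsGT_of_mem (Set.mem_Ico.2 ⟨le_refl 0, Real.pi_pos⟩)] with ε hεm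
    simp only [integrand_rewrite M N β a x]
    rw [MeasureTheory.integral_finset_sum]
    · refine (Finset.sum_congr rfl fun k _ => ?_).symm
      rw [MeasureTheory.integral_finset_sum]
      · refine (Finset.sum_congr rfl fun n _ => ?_).symm
        rw [MeasureTheory.integral_const_mul]
      · exact fun n _ => (fker_integrableOn_S _ x hεm.1 hεm.2).const_mul _
    · exact fun k _ => integrable_finset_sum _
        (fun n _ => (fker_integrableOn_S _ x hεm.1 hεm.2).const_mul _)
  -- step 2 : Fourier integral of H
  have hFour : ∫ x in (0:ℝ)..(2 * π), G x * Complex.exp (-(K * Complex.I * x))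
      = ∑ k ∈ Finset.range (M + 1), ∑ n ∈ Finset.range (N + 1),
          β k * a n * Wc ((k : ℤ) - 2 * n)
            * (if (2 * (k : ℤ) - 2 * n - K : ℤ) = 0 then ((2*π:ℝ):ℂ) else 0) := by
    have hpt : ∀ x : ℝ, G x * Complex.exp (-(K * Complex.I * x))
        = ∑ k ∈ Finset.range (M + 1), ∑ n ∈ Finset.range (N + 1),
            β k * a n * Wc ((k : ℤ) - 2 * n)
              * Complex.exp (((2 * (k : ℤ) - 2 * n - K : ℤ) : ℂ) * Complex.I * x) := by
      intro x
      rw [hGH x, hH]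
      rw [Finset.sum_mul]
      refine Finset.sum_congr rfl fun k _ => ?_
      rw [Finset.sum_mul]
      refine Finset.sum_congr rfl fun n _ => ?_
      have hcomb : Complex.exp ((k : ℂ) * Complex.I * x)
            * Complex.exp ((((k : ℤ) - 2 * n : ℤ) : ℂ) * Complex.I * x)
            * Complex.exp (-((K : ℂ) * Complex.I * x))
          = Complex.exp (((2 * (k : ℤ) - 2 * n - K : ℤ) : ℂ) * Complex.I * x) := by
        rw [← Complex.exp_add, ← Complex.exp_add]
        congr 1
        push_cast
        ring
      calc β k * a n * Complex.exp ((k : ℂ) * Complex.I * x)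
            * (Complex.exp ((((k : ℤ) - 2 * n : ℤ) : ℂ) * Complex.I * x) * Wc ((k : ℤ) - 2 * n))
            * Complex.exp (-((K : ℂ) * Complex.I * x))
          = β k * a n * Wc ((k : ℤ) - 2 * n)
            * (Complex.exp ((k : ℂ) * Complex.I * x)
              * Complex.exp ((((k : ℤ) - 2 * n : ℤ) : ℂ) * Complex.I * x)
              * Complex.exp (-((K : ℂ) * Complex.I * x))) := by ring
        _ = _ := by rw [hcomb]
    rw [intervalIntegral.integral_congr (fun x _ => hpt x)]
    rw [intervalIntegral.integral_finset_sum]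
    · refine Finset.sum_congr rfl fun k _ => ?_
      rw [intervalIntegral.integral_finset_sum]
      · refine Finset.sum_congr rfl fun n _ => ?_
        rw [intervalIntegral.integral_const_mul, intExp]
      · intro n _
        exact (Continuous.intervalIntegrable (by fun_prop) _ _)
    · intro k _
      exact (Continuous.intervalIntegrable (by fun_prop) _ _)
  -- step 3 : algebra
  rw [hFour, Finset.sum_comm, Finset.mul_sum]
  rcases Nat.even_or_odd K with hKe | hKo
  · have hK2 : K % 2 = 0 := Nat.even_iff.1 hKe
    obtain ⟨q, rfl⟩ : ∃ q, K = 2 * q := ⟨K / 2, by omega⟩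
    rw [show 2 * q / 2 = q by omega]
    rw [if_pos hK2, Finset.mul_sum]
    refine Finset.sum_congr rfl fun n _ => ?_
    rw [Finset.mul_sum]
    have hcond : ∀ k : ℕ, ((2 * (k : ℤ) - 2 * n - (2 * q) : ℤ) = 0) ↔ k = q + n := by
      intro k
      constructor <;> intro h <;> omega
    have hstep : ∀ k ∈ Finset.range (M + 1),
        ((1 / (2 * π) : ℝ) : ℂ) * (β k * a n * Wc ((k : ℤ) - 2 * n)
            * (if (2 * (k : ℤ) - 2 * n - (2 * q : ℕ) : ℤ) = 0 then ((2*π:ℝ):ℂ) else 0))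
          = (if k = q + n then
              ((1 / (2 * π) : ℝ) : ℂ) * (β k * a n * Wc ((k : ℤ) - 2 * n) * ((2*π:ℝ):ℂ))
            else 0) := by
      intro k _
      by_cases h : (2 * (k : ℤ) - 2 * n - (2 * q : ℕ) : ℤ) = 0
      · rw [if_pos h, if_pos ((hcond k).1 h)]
      · rw [if_neg h, if_neg (fun hc => h ((hcond k).2 hc)), mul_zero, mul_zero]
    rw [Finset.sum_congr rfl hstep, Finset.sum_ite_eq' (Finset.range (M + 1))]
    by_cases hkM : q + n ≤ M
    · rw [if_pos (Finset.mem_range.2 (by omega)), if_pos hkM]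
      have hsgn : Real.sign (((q + n : ℕ) : ℤ) - 2 * n : ℤ)
          = Real.sign (((q : ℕ) : ℝ) - (n : ℝ)) := by
        congr 1
        push_cast
        ring
      rw [Wc, hsgn]
      have hπC : (π : ℂ) ≠ 0 := Complex.ofReal_ne_zero.2 Real.pi_ne_zero
      push_cast
      field_simp [hπC]
    · rw [if_neg (fun hmem : q + n ∈ Finset.range (M + 1) =>
        hkM (by simpa [Nat.lt_succ_iff] using hmem)), if_neg hkM, mul_zero]
  · have hK2 : K % 2 ≠ 0 := by
      rw [Nat.odd_iff] at hKo
      omega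
    rw [if_neg hK2, mul_zero]
    refine Finset.sum_eq_zero fun n _ => ?_
    have hz : ∑ k ∈ Finset.range (M + 1),
        (β k * a n * Wc ((k : ℤ) - 2 * n)
          * (if (2 * (k : ℤ) - 2 * n - K : ℤ) = 0 then ((2*π:ℝ):ℂ) else 0)) = 0 := by
      refine Finset.sum_eq_zero fun k _ => ?_
      have hcf : ¬ ((2 * (k : ℤ) - 2 * n - K : ℤ) = 0) := by omega
      rw [if_neg hcf, mul_zero]
    rw [hz, mul_zero]
end
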